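/- arXiv:math/0501109 — 5 statements merged into one kernel-verified Lean document; each statement's English description precedes it below -/
import Mathlib

section
/- Let N be a positive integer and let y, z ∈ S_N with z ≤ y in the Bruhat order. Then: (i) the multiplication map (g,u) ↦ g·u is a bijection from (U⁻_z·z ∩ B_N⁺ y B_N⁺) × U⁰_z onto U⁻·z ∩ B_N⁺ y B_N⁺; and (ii) the multiplication map (g,u,h) ↦ g·u·h is a bijection from (U⁻_z·z ∩ B_N⁺ y B_N⁺) × U⁰_z × T_N onto B_N⁻·z ∩ B_N⁺ y B_N⁺. -/
open Matrix

noncomputable section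

abbrev Mat (k l : ℕ) := Matrix (Fin k) (Fin l) ℂ

/-- permutation matrix: (i,j) entry is 1 exactly when i = w j -/
def permMat (k : ℕ) (w : Equiv.Perm (Fin k)) : Mat k k :=
  fun i j => if i = w j then 1 else 0

/-- invertible upper triangular matrices -/
def Bp (k : ℕ) : Set (Mat k k) := {M | IsUnit M ∧ ∀ i j : Fin k, j < i → M i j = 0}

/-- invertible lower triangular matrices -/
def Bm (k : ℕ) : Set (Mat k k) := {M | IsUnit M ∧ ∀ i j : Fin k, i < j → M i j = 0}

def dcPlus {k l : ℕ} (w : Mat k l) : Set (Mat k l) :=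
  {x | ∃ b ∈ Bp k, ∃ b' ∈ Bp l, x = b * w * b'}

def dcMinus {k l : ℕ} (w : Mat k l) : Set (Mat k l) :=
  {x | ∃ b ∈ Bm k, ∃ b' ∈ Bm l, x = b * w * b'}

/-- comparison of finsets: sorted lists compare termwise -/
def finsetLE {k : ℕ} (A B : Finset (Fin k)) : Prop :=
  List.Forall₂ (· ≤ ·) (A.sort (· ≤ ·)) (B.sort (· ≤ ·))

/-- Bruhat order on S_k -/
def bruhatLE {k : ℕ} (y z : Equiv.Perm (Fin k)) : Prop :=
  ∀ p : Fin k, finsetLE ((Finset.Iic p).image y) ((Finset.Iic p).image z)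

/-- Zariski closure in the space of k×l matrices -/
def zClosure {k l : ℕ} (S : Set (Mat k l)) : Set (Mat k l) :=
  {x | ∀ p : MvPolynomial (Fin k × Fin l) ℂ,
      (∀ y ∈ S, MvPolynomial.eval (fun q => y q.1 q.2) p = 0) →
      MvPolynomial.eval (fun q => x q.1 q.2) p = 0}

def revP (k : ℕ) : Equiv.Perm (Fin k) := ⟨Fin.rev, Fin.rev, Fin.rev_rev, Fin.rev_rev⟩

def fe (m n : ℕ) : Fin n ⊕ Fin m ≃ Fin (m + n) :=
  finSumFinEquiv.trans (finCongr (Nat.add_comm n m))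

/-- the block matrix [[w∘ⁿ, 0],[x, w∘ᵐ]] -/
def embMat (m n : ℕ) (x : Mat m n) : Mat (m+n) (m+n) :=
  Matrix.reindex (fe m n) (fe m n)
    (Matrix.fromBlocks (permMat n (revP n)) 0 x (permMat m (revP m)))

/-- the permutation (w∘ⁿ,w∘ᵐ) ∈ S_{m+n} -/
def wnmPerm (m n : ℕ) : Equiv.Perm (Fin (m+n)) :=
  ((fe m n).symm.trans (Equiv.sumCongr (revP n) (revP m))).trans (fe m n)

def Pset (m n : ℕ) (w : Equiv.Perm (Fin (m+n))) : Set (Mat m n) :=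
  {x | embMat m n x ∈ dcPlus (permMat (m+n) w)}

/-- the matrix with t×t identity in upper-left corner, zeros elsewhere -/
def Imn (m n t : ℕ) : Mat m n := fun i j => if (i:ℕ) = (j:ℕ) ∧ (i:ℕ) < t then 1 else 0

/-- diagonal matrix with first t diagonal entries 0 and the rest 1 -/
def Jk (k t : ℕ) : Mat k k := fun i j => if (i:ℕ) = (j:ℕ) ∧ t ≤ (i:ℕ) then 1 else 0

noncomputable def subRank {k l : ℕ} (x : Mat k l) (R : Finset (Fin k)) (C : Finset (Fin l)) : ℕ :=
  (x.submatrix (fun i : {a // a ∈ R} => i.1) (fun j : {a // a ∈ C} => j.1)).rank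

/-- v(1) < ⋯ < v(t) -/
def headMono {k : ℕ} (t : ℕ) (v : Equiv.Perm (Fin k)) : Prop :=
  ∀ i j : Fin k, i < j → (j:ℕ) < t → v i < v j

/-- u(t+1) < ⋯ < u(k) -/
def tailMono {k : ℕ} (t : ℕ) (u : Equiv.Perm (Fin k)) : Prop :=
  ∀ i j : Fin k, i < j → t ≤ (i:ℕ) → u i < u j

def embPerm {k t : ℕ} (h : t ≤ k) (τ : Equiv.Perm (Fin t)) : Equiv.Perm (Fin k) :=
  τ.viaFintypeEmbedding (Fin.castLEEmb h)
/-- U⁻: lower triangular, unipotent -/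
def Um (N : ℕ) : Set (Mat N N) :=
  {M | (∀ i j : Fin N, i < j → M i j = 0) ∧ ∀ i, M i i = 1}

/-- U⁺: upper triangular, unipotent -/
def Up (N : ℕ) : Set (Mat N N) :=
  {M | (∀ i j : Fin N, j < i → M i j = 0) ∧ ∀ i, M i i = 1}

/-- T_N: invertible diagonal matrices -/
def TN (N : ℕ) : Set (Mat N N) :=
  {M | IsUnit M ∧ ∀ i j : Fin N, i ≠ j → M i j = 0}

/-- U⁻_z = U⁻ ∩ z U⁻ z⁻¹ -/
def UmZ (N : ℕ) (z : Equiv.Perm (Fin N)) : Set (Mat N N) :=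
  Um N ∩ {M | ∃ u ∈ Um N, M = permMat N z * u * permMat N z⁻¹}

/-- U⁰_z = (z⁻¹ U⁻ z) ∩ U⁺ -/
def U0Z (N : ℕ) (z : Equiv.Perm (Fin N)) : Set (Mat N N) :=
  {M | ∃ u ∈ Um N, M = permMat N z⁻¹ * u * permMat N z} ∩ Up N


namespace St0
variable {N : ℕ}

lemma mul_permMat (M : Mat N N) (z : Equiv.Perm (Fin N)) (i j : Fin N) :
    (M * permMat N z) i j = M i (z j) := by
  rw [Matrix.mul_apply, Finset.sum_eq_single (z j)]
  · simp [permMat]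
  · intro k _ hk
    simp [permMat, hk]
  · simp

lemma permMat_mul (z : Equiv.Perm (Fin N)) (M : Mat N N) (i j : Fin N) :
    (permMat N z * M) i j = M (z⁻¹ i) j := by
  rw [Matrix.mul_apply, Finset.sum_eq_single (z⁻¹ i)]
  · simp [permMat]
  · intro k _ hk
    have : i ≠ z k := fun h => hk (by simp [h])
    simp [permMat, this]
  · simp

lemma permMat_mul_permMat (z w : Equiv.Perm (Fin N)) :
    permMat N z * permMat N w = permMat N (z * w) := by
  ext i j
  rw [permMat_mul]
  by_cases h : i = z (w j)
  · simp [permMat, h, Equiv.Perm.mul_apply, Equiv.symm_apply_eq]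
  · have h2 : ¬ (z⁻¹ i = w j) := fun he => h (by rw [← he]; simp)
    simp [permMat, h, h2, Equiv.Perm.mul_apply]
    exact h2

lemma permMat_one : permMat N 1 = (1 : Mat N N) := by
  ext i j
  simp [permMat, Matrix.one_apply]
  split_ifs with h <;> simp [h]

lemma permMat_mul_inv (z : Equiv.Perm (Fin N)) : permMat N z * permMat N z⁻¹ = 1 := by
  rw [permMat_mul_permMat, mul_inv_cancel, permMat_one]

lemma permMat_inv_mul (z : Equiv.Perm (Fin N)) : permMat N z⁻¹ * permMat N z = 1 := by
  rw [permMat_mul_permMat, inv_mul_cancel, permMat_one]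

lemma conj_entry (z : Equiv.Perm (Fin N)) (u : Mat N N) (a b : Fin N) :
    (permMat N z * u * permMat N z⁻¹) a b = u (z⁻¹ a) (z⁻¹ b) := by
  rw [mul_permMat, permMat_mul]

def SuppOn (r : Fin N → Fin N → Prop) (X : Mat N N) : Prop := ∀ i j, ¬ r i j → X i j = 0

def UniP (r : Fin N → Fin N → Prop) : Set (Mat N N) :=
  {M | (∀ i j, i ≠ j → ¬ r i j → M i j = 0) ∧ ∀ i, M i i = 1}

variable {r : Fin N → Fin N → Prop}

lemma suppOn_mul (ht : Transitive r) {X Y : Mat N N} (hX : SuppOn r X) (hY : SuppOn r Y) :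
    SuppOn r (X * Y) := by
  intro i j hij
  rw [Matrix.mul_apply]
  apply Finset.sum_eq_zero
  intro k _
  by_cases h1 : r i k
  · by_cases h2 : r k j
    · exact absurd (ht h1 h2) hij
    · rw [hY _ _ h2, mul_zero]
  · rw [hX _ _ h1, zero_mul]

lemma suppOn_neg {X : Mat N N} (hX : SuppOn r X) : SuppOn r (-X) := fun i j h => by
  rw [Matrix.neg_apply, hX _ _ h, neg_zero]

lemma suppOn_pow (ht : Transitive r) {X : Mat N N} (hX : SuppOn r X) :
    ∀ m, SuppOn r (X ^ (m + 1))
  | 0 => by rw [pow_one]; exact hX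
  | (m + 1) => by rw [pow_succ]; exact suppOn_mul ht (suppOn_pow ht hX m) hX

lemma suppOn_pow_apply (hh : ∀ ⦃a b⦄, r a b → b < a) {X : Mat N N} (hX : SuppOn r X) :
    ∀ (m : ℕ) (i j : Fin N), ¬ ((j : ℕ) + m ≤ (i : ℕ)) → (X ^ m) i j = 0
  | 0, i, j, h => by
    have hne : i ≠ j := by rintro rfl; omega
    rw [pow_zero, Matrix.one_apply_ne hne]
  | (m + 1), i, j, h => by
    rw [pow_succ', Matrix.mul_apply]
    apply Finset.sum_eq_zero
    intro k _
    by_cases h1 : r i k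
    · have hk : (k : ℕ) < (i : ℕ) := hh h1
      have : ¬ ((j : ℕ) + m ≤ (k : ℕ)) := by omega
      rw [suppOn_pow_apply hh hX m k j this, mul_zero]
    · rw [hX _ _ h1, zero_mul]

lemma suppOn_nilpotent (hh : ∀ ⦃a b⦄, r a b → b < a) {X : Mat N N} (hX : SuppOn r X) :
    X ^ N = 0 := by
  ext i j
  rw [Matrix.zero_apply]
  exact suppOn_pow_apply hh hX N i j (by have := i.isLt; omega)

lemma uniP_sub_one {M : Mat N N} (hM : M ∈ UniP r) : SuppOn r (M - 1) := by
  intro i j h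
  rcases eq_or_ne i j with rfl | hne
  · rw [Matrix.sub_apply, hM.2 i, Matrix.one_apply_eq, sub_self]
  · rw [Matrix.sub_apply, hM.1 i j hne h, Matrix.one_apply_ne hne, sub_zero]

lemma one_mem_uniP : (1 : Mat N N) ∈ UniP r :=
  ⟨fun _ _ hne _ => Matrix.one_apply_ne hne, fun i => Matrix.one_apply_eq i⟩

lemma mul_mem_uniP (ht : Transitive r) (hh : ∀ ⦃a b⦄, r a b → b < a) {M M' : Mat N N}
    (h1 : M ∈ UniP r) (h2 : M' ∈ UniP r) : M * M' ∈ UniP r := by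
  constructor
  · intro i j hne hr
    rw [Matrix.mul_apply]
    apply Finset.sum_eq_zero
    intro k _
    by_cases h1k : r i k
    · by_cases hkj : r k j
      · exact absurd (ht h1k hkj) hr
      · rcases eq_or_ne k j with rfl | hkj'
        · exact absurd h1k hr
        · rw [h2.1 k j hkj' hkj, mul_zero]
    · rcases eq_or_ne i k with rfl | hik
      · rw [h2.1 i j hne hr, mul_zero]
      · rw [h1.1 i k hik h1k, zero_mul]
  · intro i
    rw [Matrix.mul_apply, Finset.sum_eq_single i]
    · rw [h1.2, h2.2, one_mul]
    · intro k _ hk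
      by_cases h1k : r i k
      · by_cases hki : r k i
        · exact absurd (hh (ht h1k hki)) (lt_irrefl _)
        · rw [h2.1 k i hk hki, mul_zero]
      · rw [h1.1 i k (Ne.symm hk) h1k, zero_mul]
    · intro h; exact absurd (Finset.mem_univ i) h

lemma uniP_inv (ht : Transitive r) (hh : ∀ ⦃a b⦄, r a b → b < a) {M : Mat N N}
    (hM : M ∈ UniP r) : ∃ M' ∈ UniP r, M * M' = 1 ∧ M' * M = 1 := by
  set X : Mat N N := M - 1 with hX
  have hsupp : SuppOn r X := uniP_sub_one hM
  have hnil : X ^ N = 0 := suppOn_nilpotent hh hsupp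
  set M' : Mat N N := ∑ m ∈ Finset.range (N + 1), (-X) ^ m with hM'
  have hirr : ∀ i, ¬ r i i := fun i h => lt_irrefl _ (hh h)
  have hmem : M' ∈ UniP r := by
    constructor
    · intro i j hne hr
      rw [hM', Matrix.sum_apply]
      apply Finset.sum_eq_zero
      intro m _
      cases m with
      | zero => rw [pow_zero, Matrix.one_apply_ne hne]
      | succ t => exact suppOn_pow ht (suppOn_neg hsupp) t i j hr
    · intro i
      rw [hM', Matrix.sum_apply, Finset.sum_eq_single 0]
      · rw [pow_zero, Matrix.one_apply_eq]
      · intro m _ hm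
        obtain ⟨t, rfl⟩ : ∃ t, m = t + 1 := ⟨m - 1, by omega⟩
        exact suppOn_pow ht (suppOn_neg hsupp) t i i (hirr i)
      · intro h; exact absurd (by simp : (0:ℕ) ∈ Finset.range (N+1)) h
  have hXN1 : (-X) ^ (N + 1) = 0 := by
    rw [neg_pow, pow_succ X, hnil, zero_mul, mul_zero]

  have hprod : M' * M = 1 := by
    have hg := geom_sum_mul (-X) (N + 1)
    rw [hXN1, zero_sub] at hg
    have : M' * (-(X + 1)) = -1 := by
      rw [hM']
      rw [neg_add, ← sub_eq_add_neg]
      exact hg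
    have h2 : M' * (X + 1) = 1 := by
      have := congrArg Neg.neg this
      rw [mul_neg, neg_neg, neg_neg] at this
      exact this
    rwa [hX, sub_add_cancel] at h2
  exact ⟨M', hmem, mul_eq_one_comm.mpr hprod, hprod⟩

lemma uniP_inter {rm rp : Fin N → Fin N → Prop}
    (hdisj : ∀ i j, ¬ (rm i j ∧ rp i j)) {M : Mat N N}
    (h1 : M ∈ UniP rm) (h2 : M ∈ UniP rp) : M = 1 := by
  ext i j
  rcases eq_or_ne i j with rfl | hne
  · rw [h1.2, Matrix.one_apply_eq]
  · rw [Matrix.one_apply_ne hne]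
    by_cases h : rm i j
    · exact h2.1 i j hne (fun h' => hdisj i j ⟨h, h'⟩)
    · exact h1.1 i j hne h

lemma uniP_mono {r' : Fin N → Fin N → Prop} (hsub : ∀ i j, r i j → r' i j) :
    UniP r ⊆ UniP r' :=
  fun _ hM => ⟨fun i j hne h => hM.1 i j hne (fun hr => h (hsub _ _ hr)), hM.2⟩

def eMat (i j : Fin N) (c : ℂ) : Mat N N := fun a b => if a = i ∧ b = j then c else 0

lemma mul_eMat (u : Mat N N) (i j : Fin N) (c : ℂ) (a b : Fin N) :
    (u * eMat i j c) a b = if b = j then u a i * c else 0 := by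
  rw [Matrix.mul_apply]
  by_cases hb : b = j
  · subst hb
    rw [if_pos rfl, Finset.sum_eq_single i]
    · simp [eMat]
    · intro k _ hk; simp [eMat, hk]
    · simp
  · rw [if_neg hb]
    apply Finset.sum_eq_zero
    intro k _
    simp [eMat, hb]

lemma mul_one_sub_eMat (u : Mat N N) (i j : Fin N) (c : ℂ) (a b : Fin N) :
    (u * (1 - eMat i j c)) a b = u a b - (if b = j then u a i * c else 0) := by
  rw [Matrix.mul_sub, Matrix.mul_one, Matrix.sub_apply, mul_eMat]

lemma one_sub_eMat_mem (rp : Fin N → Fin N → Prop) (i j : Fin N) (c : ℂ)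
    (hr : rp i j) (hne : i ≠ j) : (1 - eMat i j c) ∈ UniP rp := by
  constructor
  · intro a b hab hnr
    rw [Matrix.sub_apply, Matrix.one_apply_ne hab]
    have : ¬ (a = i ∧ b = j) := by rintro ⟨rfl, rfl⟩; exact hnr hr
    simp [eMat, this]
  · intro a
    rw [Matrix.sub_apply, Matrix.one_apply_eq]
    have : ¬ (a = i ∧ a = j) := by rintro ⟨rfl, rfl⟩; exact hne rfl
    simp [eMat, this]

lemma exists_elim (rm rp : Fin N → Fin N → Prop)
    (hm : ∀ ⦃a b⦄, rm a b → b < a) (hp : ∀ ⦃a b⦄, rp a b → b < a)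
    (hpt : Transitive rp)
    (hcov : ∀ ⦃a b : Fin N⦄, b < a → rm a b ∨ rp a b)
    {u : Mat N N} (hu : u ∈ UniP (fun i j : Fin N => j < i)) :
    ∃ v ∈ UniP rp, u * v ∈ UniP rm := by
  classical
  have hLt : Transitive (fun i j : Fin N => j < i) := fun a b c h1 h2 => h2.trans h1
  have hLh : ∀ ⦃a b : Fin N⦄, (fun i j : Fin N => j < i) a b → b < a := fun a b h => h
  suffices H : ∀ m : ℕ, ∀ u ∈ UniP (fun i j : Fin N => j < i),
      (∀ i j : Fin N, rp i j → (i : ℕ) < N - m → u i j = 0) →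
      ∃ v ∈ UniP rp, u * v ∈ UniP rm by
    exact H N u hu (fun i j _ hij => absurd hij (by omega))
  intro m
  induction m with
  | zero =>
    intro u hu hclean
    refine ⟨1, one_mem_uniP, ?_⟩
    rw [Matrix.mul_one]
    refine ⟨fun i j hne hr => ?_, hu.2⟩
    by_cases hji : j < i
    · rcases hcov hji with h | h
      · exact absurd h hr
      · exact hclean i j h (by omega)
    · exact hu.1 i j hne hji
  | succ m ih =>
    intro u hu hclean
    by_cases hNm : N - m = N - (m + 1)
    · exact ih u hu (fun i j hr hij => hclean i j hr (by omega))
    · have hkN : N - (m + 1) < N := by omega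
      set k' : Fin N := ⟨N - (m + 1), hkN⟩ with hk'
      suffices Inner : ∀ n : ℕ, ∀ u ∈ UniP (fun i j : Fin N => j < i),
          (∀ i j : Fin N, rp i j → (i : ℕ) < N - (m + 1) → u i j = 0) →
          (Finset.univ.filter (fun j => rp k' j ∧ u k' j ≠ 0)).card ≤ n →
          ∃ v ∈ UniP rp, u * v ∈ UniP rm by
        exact Inner _ u hu hclean le_rfl
      intro n
      induction n with
      | zero =>
        intro u hu hclean hcard
        apply ih u hu
        intro i j hr hij
        rcases lt_or_eq_of_le (Nat.lt_succ_iff.mp (by omega : (i:ℕ) < (N - (m+1)) + 1)) with h | h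
        · exact hclean i j hr h
        · have hik : i = k' := Fin.ext h
          by_contra hne
          have hmem : j ∈ Finset.univ.filter (fun b => rp k' b ∧ u k' b ≠ 0) :=
            Finset.mem_filter.mpr ⟨Finset.mem_univ j, by rw [← hik]; exact hr,
              by rw [← hik]; exact hne⟩
          rw [Finset.card_eq_zero.mp (Nat.le_zero.mp hcard)] at hmem
          exact absurd hmem (Finset.notMem_empty j)
      | succ n ihn =>
        intro u hu hclean hcard
        by_cases hbad : (Finset.univ.filter (fun j => rp k' j ∧ u k' j ≠ 0)).Nonempty
        · obtain ⟨j, hj⟩ := hbad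
          rw [Finset.mem_filter] at hj
          obtain ⟨-, hrpj, hujne⟩ := hj
          have hjk : j < k' := hp hrpj
          set c : ℂ := u k' j with hc
          set E : Mat N N := 1 - eMat k' j c with hE
          have hEmem : E ∈ UniP rp := one_sub_eMat_mem rp k' j c hrpj (ne_of_gt hjk)
          have hu' : u * E ∈ UniP (fun i j : Fin N => j < i) :=
            mul_mem_uniP hLt hLh hu (uniP_mono (fun a b h => hp h) hEmem)
          have hentry : ∀ a b, (u * E) a b = u a b - (if b = j then u a k' * c else 0) :=
            fun a b => mul_one_sub_eMat u k' j c a b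
          have hclean' : ∀ i j' : Fin N, rp i j' → (i : ℕ) < N - (m + 1) → (u * E) i j' = 0 := by
            intro i j' hr hij
            have hkval : (k' : ℕ) = N - (m + 1) := rfl
            have hik' : u i k' = 0 := by
              apply hu.1
              · intro h
                rw [h] at hij
                omega
              · intro hlt
                have h2 : (k' : ℕ) < (i : ℕ) := hlt
                omega
            rw [hentry, hik', hclean i j' hr hij, zero_mul, ite_self, sub_zero]
          have hcard' : (Finset.univ.filter (fun b => rp k' b ∧ (u * E) k' b ≠ 0)).card ≤ n := by
            have hsub : (Finset.univ.filter (fun b => rp k' b ∧ (u * E) k' b ≠ 0)) ⊆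
                (Finset.univ.filter (fun b => rp k' b ∧ u k' b ≠ 0)).erase j := by
              intro b hb
              rw [Finset.mem_filter] at hb
              obtain ⟨-, hrb, hbne⟩ := hb
              have hbj : b ≠ j := by
                rintro rfl
                apply hbne
                rw [hentry, if_pos rfl, hu.2, one_mul, sub_self]
              apply Finset.mem_erase.mpr
              refine ⟨hbj, Finset.mem_filter.mpr ⟨Finset.mem_univ b, hrb, ?_⟩⟩
              intro h0
              apply hbne
              rw [hentry, if_neg hbj, h0, sub_zero]
            calc (Finset.univ.filter (fun b => rp k' b ∧ (u * E) k' b ≠ 0)).card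
                ≤ ((Finset.univ.filter (fun b => rp k' b ∧ u k' b ≠ 0)).erase j).card :=
                  Finset.card_le_card hsub
              _ = (Finset.univ.filter (fun b => rp k' b ∧ u k' b ≠ 0)).card - 1 :=
                  Finset.card_erase_of_mem (Finset.mem_filter.mpr ⟨Finset.mem_univ j, hrpj, hujne⟩)
              _ ≤ n := by omega
          obtain ⟨v', hv', hv'2⟩ := ihn (u * E) hu' hclean' hcard'
          refine ⟨E * v', mul_mem_uniP hpt (fun a b h => hp h) hEmem hv', ?_⟩
          rw [← Matrix.mul_assoc]
          exact hv'2
        · exact ihn u hu hclean (by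
            rw [Finset.not_nonempty_iff_eq_empty.mp hbad]
            simp)

-- entry of permMat z⁻¹ * u * permMat z
lemma conj_entry' (z : Equiv.Perm (Fin N)) (u : Mat N N) (a b : Fin N) :
    (permMat N z⁻¹ * u * permMat N z) a b = u (z a) (z b) := by
  have := conj_entry z⁻¹ u a b
  rw [inv_inv] at this
  exact this

lemma um_eq : Um N = UniP (fun i j : Fin N => j < i) := by
  ext M
  constructor
  · intro h
    exact ⟨fun i j hne hr => h.1 i j (lt_of_le_of_ne (not_lt.mp hr) hne), h.2⟩
  · intro h
    exact ⟨fun i j hij => h.1 i j (ne_of_lt hij) (fun h' => absurd (h'.trans hij) (lt_irrefl j)), h.2⟩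

lemma umZ_eq (z : Equiv.Perm (Fin N)) :
    UmZ N z = UniP (fun i j : Fin N => j < i ∧ z⁻¹ j < z⁻¹ i) := by
  ext M
  constructor
  · rintro ⟨hUm, u, hu, rfl⟩
    refine ⟨?_, fun i => hUm.2 i⟩
    intro i j hne hr
    by_cases hji : j < i
    · rw [conj_entry]
      apply hu.1
      have h1 : z⁻¹ i ≠ z⁻¹ j := fun h => hne (z⁻¹.injective h)
      have h2 : ¬ (z⁻¹ j < z⁻¹ i) := fun h => hr ⟨hji, h⟩
      exact lt_of_le_of_ne (not_lt.mp h2) h1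
    · exact hUm.1 i j (lt_of_le_of_ne (not_lt.mp hji) hne)
  · intro hM
    have hUm : M ∈ Um N := by
      refine ⟨fun i j hij => hM.1 i j (ne_of_lt hij) ?_, hM.2⟩
      rintro ⟨h1, -⟩
      exact absurd (h1.trans hij) (lt_irrefl j)
    refine ⟨hUm, (fun c d => M (z c) (z d) : Mat N N), ⟨?_, ?_⟩, ?_⟩
    · intro c d hcd
      apply hM.1
      · exact fun h => absurd (z.injective h) (ne_of_lt hcd)
      · rintro ⟨-, h2⟩
        simp only [Equiv.Perm.inv_def, Equiv.symm_apply_apply] at h2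
        exact absurd (h2.trans hcd) (lt_irrefl d)
    · intro c; exact hM.2 (z c)
    · ext a b
      exact (by simp : M a b = M (z (z⁻¹ a)) (z (z⁻¹ b))).trans
        (conj_entry z (fun c d => M (z c) (z d)) a b).symm

lemma u0Z_eq (z : Equiv.Perm (Fin N)) :
    U0Z N z = UniP (fun i j : Fin N => i < j ∧ z j < z i) := by
  ext M
  constructor
  · rintro ⟨⟨u, hu, rfl⟩, hUp⟩
    refine ⟨?_, fun i => hUp.2 i⟩
    intro i j hne hr
    by_cases hij : i < j
    · rw [conj_entry']
      apply hu.1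
      have h1 : z i ≠ z j := fun h => hne (z.injective h)
      have h2 : ¬ (z j < z i) := fun h => hr ⟨hij, h⟩
      exact lt_of_le_of_ne (not_lt.mp h2) h1
    · exact hUp.1 i j (lt_of_le_of_ne (not_lt.mp hij) (Ne.symm hne))
  · intro hM
    have hUp : M ∈ Up N := by
      refine ⟨fun i j hji => hM.1 i j (Ne.symm (ne_of_lt hji)) ?_, hM.2⟩
      rintro ⟨h1, -⟩
      exact absurd (h1.trans hji) (lt_irrefl i)
    refine ⟨⟨(fun c d => M (z⁻¹ c) (z⁻¹ d) : Mat N N), ⟨?_, ?_⟩, ?_⟩, hUp⟩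
    · intro c d hcd
      apply hM.1
      · exact fun h => absurd (z⁻¹.injective h) (ne_of_lt hcd)
      · rintro ⟨-, h2⟩
        simp only [Equiv.Perm.inv_def, Equiv.apply_symm_apply] at h2
        exact absurd (h2.trans hcd) (lt_irrefl d)
    · intro c; exact hM.2 (z⁻¹ c)
    · ext a b
      exact (by simp : M a b = M (z⁻¹ (z a)) (z⁻¹ (z b))).trans
        (conj_entry' z (fun c d => M (z⁻¹ c) (z⁻¹ d)) a b).symm

lemma uniP_conj (z : Equiv.Perm (Fin N)) (r r' : Fin N → Fin N → Prop)
    (hrr' : ∀ a b, ¬ r' a b → ¬ r (z⁻¹ a) (z⁻¹ b)) {M : Mat N N} (hM : M ∈ UniP r) :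
    permMat N z * M * permMat N z⁻¹ ∈ UniP r' := by
  constructor
  · intro a b hab h
    rw [conj_entry]
    exact hM.1 _ _ (fun he => hab (z⁻¹.injective he)) (hrr' a b h)
  · intro a
    rw [conj_entry]
    exact hM.2 _

-- Bp lemmas
lemma bp_mul {k : ℕ} {a b : Mat k k} (ha : a ∈ Bp k) (hb : b ∈ Bp k) : a * b ∈ Bp k := by
  refine ⟨ha.1.mul hb.1, fun i j hji => ?_⟩
  rw [Matrix.mul_apply]
  apply Finset.sum_eq_zero
  intro m _
  by_cases h1 : m < i
  · rw [ha.2 i m h1, zero_mul]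
  · have : j < m := lt_of_lt_of_le hji (not_lt.mp h1)
    rw [hb.2 m j this, mul_zero]

lemma bp_inv {M : Mat N N} (hM : M ∈ Bp N) : ∃ M' ∈ Bp N, M * M' = 1 ∧ M' * M = 1 := by
  have hdet : IsUnit M.det := (Matrix.isUnit_iff_isUnit_det M).mp hM.1
  haveI := M.invertibleOfIsUnitDet hdet
  have h1 : M * M⁻¹ = 1 := Matrix.mul_nonsing_inv M hdet
  have h2 : M⁻¹ * M = 1 := Matrix.nonsing_inv_mul M hdet
  have hBT : M.BlockTriangular (id : Fin N → Fin N) := fun i j h => hM.2 i j h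
  have hBTinv := Matrix.blockTriangular_inv_of_blockTriangular hBT
  exact ⟨M⁻¹, ⟨⟨⟨M⁻¹, M, h2, h1⟩, rfl⟩, fun i j h => hBTinv h⟩, h1, h2⟩

lemma up_mem_bp {u : Mat N N} (hu : u ∈ Up N) : u ∈ Bp N := by
  have hBT : u.BlockTriangular (id : Fin N → Fin N) := fun i j h => hu.1 i j h
  have hdet : u.det = 1 := by
    rw [Matrix.det_of_upperTriangular hBT]
    simp [hu.2]
  exact ⟨(Matrix.isUnit_iff_isUnit_det u).mpr (by rw [hdet]; exact isUnit_one), hu.1⟩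

lemma tn_mem_bp {t : Mat N N} (ht : t ∈ TN N) : t ∈ Bp N :=
  ⟨ht.1, fun i j h => ht.2 i j (ne_of_gt h)⟩

lemma dcPlus_mul_right {W x b : Mat N N} (hx : x ∈ dcPlus W) (hb : b ∈ Bp N) :
    x * b ∈ dcPlus W := by
  obtain ⟨b₁, h₁, b₂, h₂, rfl⟩ := hx
  exact ⟨b₁, h₁, b₂ * b, bp_mul h₂ hb, by rw [Matrix.mul_assoc]⟩


def rmz (z : Equiv.Perm (Fin N)) : Fin N → Fin N → Prop :=
  fun i j => j < i ∧ z⁻¹ j < z⁻¹ i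
def rpz (z : Equiv.Perm (Fin N)) : Fin N → Fin N → Prop :=
  fun i j => j < i ∧ z⁻¹ i < z⁻¹ j
def r0z (z : Equiv.Perm (Fin N)) : Fin N → Fin N → Prop :=
  fun i j => i < j ∧ z j < z i

lemma rmz_trans (z : Equiv.Perm (Fin N)) : Transitive (rmz z) :=
  fun _ _ _ h1 h2 => ⟨h2.1.trans h1.1, h2.2.trans h1.2⟩
lemma rpz_trans (z : Equiv.Perm (Fin N)) : Transitive (rpz z) :=
  fun _ _ _ h1 h2 => ⟨h2.1.trans h1.1, h1.2.trans h2.2⟩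
lemma rmz_h (z : Equiv.Perm (Fin N)) : ∀ ⦃a b : Fin N⦄, rmz z a b → b < a :=
  fun _ _ h => h.1
lemma rpz_h (z : Equiv.Perm (Fin N)) : ∀ ⦃a b : Fin N⦄, rpz z a b → b < a :=
  fun _ _ h => h.1
lemma rL_trans : Transitive (fun i j : Fin N => j < i) := fun _ _ _ h1 h2 => h2.trans h1
lemma rL_h : ∀ ⦃a b : Fin N⦄, (fun i j : Fin N => j < i) a b → b < a := fun _ _ h => h

lemma umZ_eq' (z : Equiv.Perm (Fin N)) : UmZ N z = UniP (rmz z) := umZ_eq z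
lemma u0Z_eq' (z : Equiv.Perm (Fin N)) : U0Z N z = UniP (r0z z) := u0Z_eq z
lemma um_eq' : Um N = UniP (fun i j : Fin N => j < i) := um_eq

lemma um_factor (z : Equiv.Perm (Fin N)) {w : Mat N N}
    (hw : w ∈ UniP (fun i j : Fin N => j < i)) :
    ∃ g ∈ UniP (rmz z), ∃ v ∈ UniP (rpz z), w = g * v := by
  obtain ⟨v₀, hv₀, hwv₀⟩ := exists_elim (rmz z) (rpz z) (rmz_h z) (rpz_h z) (rpz_trans z)
    (fun a b hba => by
      rcases lt_trichotomy (z⁻¹ b) (z⁻¹ a) with h | h | h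
      · exact Or.inl ⟨hba, h⟩
      · exact absurd (z⁻¹.injective h) (ne_of_lt hba)
      · exact Or.inr ⟨hba, h⟩) hw
  obtain ⟨v, hv, hv1, _⟩ := uniP_inv (rpz_trans z) (rpz_h z) hv₀
  exact ⟨w * v₀, hwv₀, v, hv, by rw [Matrix.mul_assoc, hv1, Matrix.mul_one]⟩

lemma rmz_rpz_disj (z : Equiv.Perm (Fin N)) : ∀ i j, ¬ (rmz z i j ∧ rpz z i j) := by
  rintro i j ⟨⟨-, h1⟩, ⟨-, h2⟩⟩
  exact absurd (h1.trans h2) (lt_irrefl _)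

lemma factor_unique (z : Equiv.Perm (Fin N)) {g₁ g₂ v₁ v₂ : Mat N N}
    (hg₁ : g₁ ∈ UniP (rmz z)) (hg₂ : g₂ ∈ UniP (rmz z))
    (hv₁ : v₁ ∈ UniP (rpz z)) (hv₂ : v₂ ∈ UniP (rpz z))
    (h : g₁ * v₁ = g₂ * v₂) : g₁ = g₂ ∧ v₁ = v₂ := by
  obtain ⟨g₂', hg₂', hgg', hg'g⟩ := uniP_inv (rmz_trans z) (rmz_h z) hg₂
  have h3 : g₂' * g₁ * v₁ = v₂ := by
    rw [Matrix.mul_assoc, h, ← Matrix.mul_assoc, hg'g, Matrix.one_mul]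
  obtain ⟨v₁', hv₁', hvv', hv'v⟩ := uniP_inv (rpz_trans z) (rpz_h z) hv₁
  have h4 : g₂' * g₁ = v₂ * v₁' := by
    rw [← h3, Matrix.mul_assoc, hvv', Matrix.mul_one]
  have hE1 : g₂' * g₁ ∈ UniP (rmz z) := mul_mem_uniP (rmz_trans z) (rmz_h z) hg₂' hg₁
  have hE2 : g₂' * g₁ ∈ UniP (rpz z) := by
    rw [h4]
    exact mul_mem_uniP (rpz_trans z) (rpz_h z) hv₂ hv₁'
  have hE : g₂' * g₁ = 1 := uniP_inter (rmz_rpz_disj z) hE1 hE2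
  have hgeq : g₁ = g₂ := by
    have h5 := congrArg (fun X => g₂ * X) hE
    simp only [Matrix.mul_one] at h5
    rw [← Matrix.mul_assoc, hgg', Matrix.one_mul] at h5
    exact h5
  refine ⟨hgeq, ?_⟩
  rw [hE, Matrix.one_mul] at h3
  exact h3

lemma reconjP (z : Equiv.Perm (Fin N)) (u : Mat N N) :
    permMat N z⁻¹ * (permMat N z * u * permMat N z⁻¹) * permMat N z = u := by
  simp only [← Matrix.mul_assoc]
  rw [permMat_inv_mul z, Matrix.one_mul, Matrix.mul_assoc, permMat_inv_mul z, Matrix.mul_one]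

lemma cancelP (z : Equiv.Perm (Fin N)) (A B : Mat N N)
    (h : A * permMat N z = B * permMat N z) : A = B := by
  have h2 := congrArg (fun X => X * permMat N z⁻¹) h
  simp only [Matrix.mul_assoc, permMat_mul_inv z, Matrix.mul_one] at h2
  exact h2

theorem part1 (N : ℕ) (y z : Equiv.Perm (Fin N)) :
    Set.BijOn (fun p : Mat N N × Mat N N => p.1 * p.2)
      ((((fun u => u * permMat N z) '' UmZ N z) ∩ dcPlus (permMat N y)) ×ˢ U0Z N z)
      (((fun u => u * permMat N z) '' Um N) ∩ dcPlus (permMat N y)) := by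
  classical
  have hPPi : permMat N z * permMat N z⁻¹ = 1 := permMat_mul_inv z
  have hPiP : permMat N z⁻¹ * permMat N z = 1 := permMat_inv_mul z
  have conj1 : ∀ u' ∈ U0Z N z, permMat N z * u' * permMat N z⁻¹ ∈ UniP (rpz z) := by
    intro u' hu'
    rw [u0Z_eq'] at hu'
    refine uniP_conj z (r0z z) (rpz z) (fun a b hn h0 => hn ?_) hu'
    obtain ⟨h1, h2⟩ := h0
    simp only [Equiv.Perm.inv_def, Equiv.apply_symm_apply] at h2
    exact ⟨h2, h1⟩
  have conj2 : ∀ v ∈ UniP (rpz z), permMat N z⁻¹ * v * permMat N z ∈ U0Z N z := by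
    intro v hv
    rw [u0Z_eq']
    have h := uniP_conj (N := N) z⁻¹ (rpz z) (r0z z) (fun a b hn hp => hn (by
      simp only [inv_inv] at hp
      obtain ⟨h1, h2⟩ := hp
      simp only [Equiv.Perm.inv_def, Equiv.symm_apply_apply] at h2
      exact ⟨h2, h1⟩)) hv
    rw [inv_inv] at h
    exact h
  refine ⟨?_, ?_, ?_⟩
  · -- MapsTo
    rintro ⟨g, u'⟩ ⟨⟨⟨mm, hmm, hg⟩, hgcell⟩, hu'⟩
    have hgeq : g = mm * permMat N z := hg.symm
    have hmm' : mm ∈ UniP (rmz z) := by rw [← umZ_eq']; exact hmm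
    have hv : permMat N z * u' * permMat N z⁻¹ ∈ UniP (rpz z) := conj1 u' hu'
    constructor
    · refine ⟨mm * (permMat N z * u' * permMat N z⁻¹), ?_, ?_⟩
      · rw [um_eq']
        exact mul_mem_uniP rL_trans rL_h
          (uniP_mono (fun i j h => h.1) hmm') (uniP_mono (fun i j h => h.1) hv)
      · show mm * (permMat N z * u' * permMat N z⁻¹) * permMat N z = g * u'
        rw [hgeq]
        simp only [← Matrix.mul_assoc]
        rw [Matrix.mul_assoc (mm * permMat N z * u') (permMat N z⁻¹) (permMat N z),
          hPiP, Matrix.mul_one]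
    · exact dcPlus_mul_right hgcell (up_mem_bp hu'.2)
  · -- InjOn
    rintro ⟨g₁, u₁⟩ ⟨⟨⟨m₁, hm₁, hg₁⟩, -⟩, hu₁⟩ ⟨g₂, u₂⟩ ⟨⟨⟨m₂, hm₂, hg₂⟩, -⟩, hu₂⟩ heq
    simp only at heq
    have hm₁' : m₁ ∈ UniP (rmz z) := by rw [← umZ_eq']; exact hm₁
    have hm₂' : m₂ ∈ UniP (rmz z) := by rw [← umZ_eq']; exact hm₂
    have hv₁ : permMat N z * u₁ * permMat N z⁻¹ ∈ UniP (rpz z) := conj1 u₁ hu₁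
    have hv₂ : permMat N z * u₂ * permMat N z⁻¹ ∈ UniP (rpz z) := conj1 u₂ hu₂
    have e : ∀ (m u : Mat N N),
        m * (permMat N z * u * permMat N z⁻¹) * permMat N z = (m * permMat N z) * u := by
      intro m u
      simp only [← Matrix.mul_assoc]
      rw [Matrix.mul_assoc (m * permMat N z * u) (permMat N z⁻¹) (permMat N z),
        hPiP, Matrix.mul_one]
    have hg₁' : m₁ * permMat N z = g₁ := hg₁
    have hg₂' : m₂ * permMat N z = g₂ := hg₂
    have key : m₁ * (permMat N z * u₁ * permMat N z⁻¹)
        = m₂ * (permMat N z * u₂ * permMat N z⁻¹) := by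
      apply cancelP z
      rw [e, e, hg₁', hg₂']
      exact heq
    obtain ⟨hgm, hvv⟩ := factor_unique z hm₁' hm₂' hv₁ hv₂ key
    have hu : u₁ = u₂ := by
      have r1 := reconjP z u₁
      have r2 := reconjP z u₂
      rw [← r1, ← r2, hvv]
    have hgg : g₁ = g₂ := by
      rw [← hg₁', ← hg₂', hgm]
    exact Prod.ext hgg hu
  · -- SurjOn
    rintro x ⟨⟨w, hw, hx⟩, hxcell⟩
    rw [um_eq'] at hw
    obtain ⟨g₀, hg₀, v, hv, hwgv⟩ := um_factor z hw
    obtain ⟨v', hv', hvv', hv'v⟩ := uniP_inv (rpz_trans z) (rpz_h z) hv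
    have hu' : permMat N z⁻¹ * v * permMat N z ∈ U0Z N z := conj2 v hv
    have huinv0 : permMat N z⁻¹ * v' * permMat N z ∈ U0Z N z := conj2 v' hv'
    have huu : (permMat N z⁻¹ * v * permMat N z) * (permMat N z⁻¹ * v' * permMat N z) = 1 := by
      simp only [← Matrix.mul_assoc]
      rw [Matrix.mul_assoc (permMat N z⁻¹ * v) (permMat N z) (permMat N z⁻¹), hPPi,
        Matrix.mul_one, Matrix.mul_assoc (permMat N z⁻¹) v v', hvv', Matrix.mul_one, hPiP]
    have hgu : (g₀ * permMat N z) * (permMat N z⁻¹ * v * permMat N z) = x := by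
      rw [← hx]
      show g₀ * permMat N z * (permMat N z⁻¹ * v * permMat N z) = w * permMat N z
      rw [hwgv]
      simp only [← Matrix.mul_assoc]
      rw [Matrix.mul_assoc g₀ (permMat N z) (permMat N z⁻¹), hPPi, Matrix.mul_one]
    have hgcell : g₀ * permMat N z ∈ dcPlus (permMat N y) := by
      have hre : g₀ * permMat N z = x * (permMat N z⁻¹ * v' * permMat N z) := by
        rw [← hgu, Matrix.mul_assoc, huu, Matrix.mul_one]
      rw [hre]
      exact dcPlus_mul_right hxcell (up_mem_bp huinv0.2)
    refine ⟨(g₀ * permMat N z, permMat N z⁻¹ * v * permMat N z),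
      ⟨⟨⟨g₀, ?_, rfl⟩, hgcell⟩, hu'⟩, hgu⟩
    rw [umZ_eq']
    exact hg₀

theorem part2 (N : ℕ) (y z : Equiv.Perm (Fin N)) :
    Set.BijOn (fun p : (Mat N N × Mat N N) × Mat N N => p.1.1 * p.1.2 * p.2)
      (((((fun u => u * permMat N z) '' UmZ N z) ∩ dcPlus (permMat N y)) ×ˢ U0Z N z) ×ˢ TN N)
      (((fun b => b * permMat N z) '' Bm N) ∩ dcPlus (permMat N y)) := by
  classical
  obtain ⟨hmap, hinj, hsurj⟩ := part1 N y z
  have hPPi : permMat N z * permMat N z⁻¹ = 1 := permMat_mul_inv z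
  have hPiP : permMat N z⁻¹ * permMat N z = 1 := permMat_inv_mul z
  have hUnitP : IsUnit (permMat N z) := ⟨⟨permMat N z, permMat N z⁻¹, hPPi, hPiP⟩, rfl⟩
  have hUnitPi : IsUnit (permMat N z⁻¹) := ⟨⟨permMat N z⁻¹, permMat N z, hPiP, hPPi⟩, rfl⟩
  have hUmUnit : ∀ w ∈ Um N, IsUnit w := by
    intro w hw
    rw [um_eq'] at hw
    obtain ⟨w', _, h1, h2⟩ := uniP_inv rL_trans rL_h hw
    exact ⟨⟨w, w', h1, h2⟩, rfl⟩
  have hdOff : ∀ t ∈ TN N, ∀ a b : Fin N, a ≠ b →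
      (permMat N z * t * permMat N z⁻¹) a b = 0 := by
    intro t ht a b hab
    rw [conj_entry]
    exact ht.2 _ _ (fun h => hab (z⁻¹.injective h))
  have hWD : ∀ (w d : Mat N N), w ∈ Um N → (∀ a b : Fin N, a ≠ b → d a b = 0) →
      (∀ i j : Fin N, i < j → (w * d) i j = 0) ∧ ∀ a, (w * d) a a = d a a := by
    intro w d hw hd
    constructor
    · intro i j hij
      rw [Matrix.mul_apply]
      apply Finset.sum_eq_zero
      intro k _
      rcases eq_or_ne k j with rfl | hkj
      · rw [hw.1 i k hij, zero_mul]
      · rw [hd k j hkj, mul_zero]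
    · intro a
      rw [Matrix.mul_apply, Finset.sum_eq_single a]
      · rw [hw.2, one_mul]
      · intro k _ hk
        rw [hd k a hk, mul_zero]
      · intro h; exact absurd (Finset.mem_univ a) h
  have assoc1 : ∀ (w t : Mat N N),
      (w * (permMat N z * t * permMat N z⁻¹)) * permMat N z = (w * permMat N z) * t := by
    intro w t
    simp only [← Matrix.mul_assoc]
    rw [Matrix.mul_assoc (w * permMat N z * t) (permMat N z⁻¹) (permMat N z), hPiP,
      Matrix.mul_one]
  refine ⟨?_, ?_, ?_⟩
  · -- MapsTo
    rintro ⟨⟨g, u'⟩, t⟩ ⟨hp1, ht⟩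
    obtain ⟨⟨w, hw, hwP⟩, hcell1⟩ := hmap hp1
    have hwP' : w * permMat N z = g * u' := hwP
    have hd : ∀ a b : Fin N, a ≠ b → (permMat N z * t * permMat N z⁻¹) a b = 0 := hdOff t ht
    have hwd := hWD w (permMat N z * t * permMat N z⁻¹) hw hd
    constructor
    · refine ⟨w * (permMat N z * t * permMat N z⁻¹), ⟨?_, ?_⟩, ?_⟩
      · exact (hUmUnit w hw).mul ((hUnitP.mul ht.1).mul hUnitPi)
      · exact hwd.1
      · show (w * (permMat N z * t * permMat N z⁻¹)) * permMat N z = g * u' * t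
        rw [assoc1, hwP']
    · exact dcPlus_mul_right hcell1 (tn_mem_bp ht)
  · -- InjOn
    rintro ⟨⟨g₁, u₁⟩, t₁⟩ ⟨hp₁, ht₁⟩ ⟨⟨g₂, u₂⟩, t₂⟩ ⟨hp₂, ht₂⟩ heq
    simp only at heq
    obtain ⟨⟨w₁, hw₁, hwP₁⟩, -⟩ := hmap hp₁
    obtain ⟨⟨w₂, hw₂, hwP₂⟩, -⟩ := hmap hp₂
    have hwP₁' : w₁ * permMat N z = g₁ * u₁ := hwP₁
    have hwP₂' : w₂ * permMat N z = g₂ * u₂ := hwP₂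
    have hd₁ := hdOff t₁ ht₁
    have hd₂ := hdOff t₂ ht₂
    have hwd₁ := hWD w₁ (permMat N z * t₁ * permMat N z⁻¹) hw₁ hd₁
    have hwd₂ := hWD w₂ (permMat N z * t₂ * permMat N z⁻¹) hw₂ hd₂
    have hkey : w₁ * (permMat N z * t₁ * permMat N z⁻¹)
        = w₂ * (permMat N z * t₂ * permMat N z⁻¹) := by
      apply cancelP z
      rw [assoc1, assoc1, hwP₁', hwP₂']
      exact heq
    have hdeq : permMat N z * t₁ * permMat N z⁻¹ = permMat N z * t₂ * permMat N z⁻¹ := by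
      ext a b
      rcases eq_or_ne a b with rfl | hab
      · have e1 := hwd₁.2 a
        have e2 := hwd₂.2 a
        rw [← e1, ← e2, hkey]
      · rw [hd₁ a b hab, hd₂ a b hab]
    have htt : t₁ = t₂ := by
      have r1 := reconjP z t₁
      have r2 := reconjP z t₂
      rw [← r1, ← r2, hdeq]
    obtain ⟨t', ht'⟩ := ht₁.1.exists_right_inv
    rw [← htt] at heq
    have h6 : g₁ * u₁ = g₂ * u₂ := by
      have h7 := congrArg (fun X => X * t') heq
      simp only [Matrix.mul_assoc] at h7
      rw [ht'] at h7
      simp only [Matrix.mul_one] at h7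
      exact h7
    have hpair : ((g₁, u₁) : Mat N N × Mat N N) = (g₂, u₂) := hinj hp₁ hp₂ h6
    exact Prod.ext hpair htt
  · -- SurjOn
    rintro x ⟨⟨b, hb, hbP⟩, hxcell⟩
    have hbP' : b * permMat N z = x := hbP
    have hdetb : IsUnit b.det := (Matrix.isUnit_iff_isUnit_det b).mp hb.1
    have hBTb : b.BlockTriangular (OrderDual.toDual : Fin N → (Fin N)ᵒᵈ) := by
      intro i j h
      exact hb.2 i j (by exact_mod_cast h)
    have hdet : b.det = ∏ i, b i i := Matrix.det_of_lowerTriangular b hBTb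
    have hne : ∀ i, b i i ≠ 0 := by
      have h0 : b.det ≠ 0 := hdetb.ne_zero
      rw [hdet] at h0
      intro i hi
      exact h0 (Finset.prod_eq_zero (Finset.mem_univ i) hi)
    set d : Mat N N := Matrix.diagonal (fun i => b i i) with hdDef
    set dinv : Mat N N := Matrix.diagonal (fun i => (b i i)⁻¹) with hdinvDef
    have hfun : (fun i => b i i * (b i i)⁻¹) = fun _ => (1 : ℂ) :=
      funext fun i => mul_inv_cancel₀ (hne i)
    have hfun2 : (fun i => (b i i)⁻¹ * b i i) = fun _ => (1 : ℂ) :=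
      funext fun i => inv_mul_cancel₀ (hne i)
    have hddinv : d * dinv = 1 := by
      rw [hdDef, hdinvDef, Matrix.diagonal_mul_diagonal, hfun, Matrix.diagonal_one]
    have hdinvd : dinv * d = 1 := by
      rw [hdDef, hdinvDef, Matrix.diagonal_mul_diagonal, hfun2, Matrix.diagonal_one]
    have hwUm : b * dinv ∈ Um N := by
      constructor
      · intro i j hij
        rw [hdinvDef, Matrix.mul_diagonal, hb.2 i j hij, zero_mul]
      · intro i
        rw [hdinvDef, Matrix.mul_diagonal, mul_inv_cancel₀ (hne i)]
    have hbwd : b = (b * dinv) * d := by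
      rw [Matrix.mul_assoc, hdinvd, Matrix.mul_one]
    have htTN : permMat N z⁻¹ * d * permMat N z ∈ TN N := by
      constructor
      · exact (hUnitPi.mul ⟨⟨d, dinv, hddinv, hdinvd⟩, rfl⟩).mul hUnitP
      · intro i j hij
        rw [conj_entry']
        exact Matrix.diagonal_apply_ne _ (fun h => hij (z.injective h))
    have htinvBp : permMat N z⁻¹ * dinv * permMat N z ∈ Bp N := by
      constructor
      · exact (hUnitPi.mul ⟨⟨dinv, d, hdinvd, hddinv⟩, rfl⟩).mul hUnitP
      · intro i j hij
        rw [conj_entry']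
        exact Matrix.diagonal_apply_ne _ (fun h => (ne_of_gt hij) (z.injective h))
    have hxwdP : x = (b * dinv) * d * permMat N z := by
      rw [← hbwd, hbP']
    have hwPx : (b * dinv) * permMat N z = x * (permMat N z⁻¹ * dinv * permMat N z) := by
      rw [hxwdP]
      simp only [← Matrix.mul_assoc]
      rw [Matrix.mul_assoc (b * dinv * d) (permMat N z) (permMat N z⁻¹), hPPi, Matrix.mul_one,
        Matrix.mul_assoc (b * dinv) d dinv, hddinv, Matrix.mul_one]
    have hwMem : (b * dinv) * permMat N z
        ∈ ((fun u => u * permMat N z) '' Um N) ∩ dcPlus (permMat N y) := by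
      refine ⟨⟨b * dinv, hwUm, rfl⟩, ?_⟩
      rw [hwPx]
      exact dcPlus_mul_right hxcell htinvBp
    obtain ⟨⟨g, u'⟩, hmem, hfeq⟩ := hsurj hwMem
    have hfeq' : g * u' = (b * dinv) * permMat N z := hfeq
    refine ⟨((g, u'), permMat N z⁻¹ * d * permMat N z), ⟨hmem, htTN⟩, ?_⟩
    show g * u' * (permMat N z⁻¹ * d * permMat N z) = x
    rw [hfeq', hxwdP]
    simp only [← Matrix.mul_assoc]
    rw [Matrix.mul_assoc (b * dinv) (permMat N z) (permMat N z⁻¹), hPPi, Matrix.mul_one]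

end St0

theorem statement0 (N : ℕ) (hN : 0 < N) (y z : Equiv.Perm (Fin N)) (hzy : bruhatLE z y) :
    Set.BijOn (fun p : Mat N N × Mat N N => p.1 * p.2)
      ((((fun u => u * permMat N z) '' UmZ N z) ∩ dcPlus (permMat N y)) ×ˢ U0Z N z)
      (((fun u => u * permMat N z) '' Um N) ∩ dcPlus (permMat N y))
    ∧
    Set.BijOn (fun p : (Mat N N × Mat N N) × Mat N N => p.1.1 * p.1.2 * p.2)
      (((((fun u => u * permMat N z) '' UmZ N z) ∩ dcPlus (permMat N y)) ×ˢ U0Z N z) ×ˢ TN N)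
      (((fun b => b * permMat N z) '' Bm N) ∩ dcPlus (permMat N y)) := by
  exact ⟨St0.part1 N y z, St0.part2 N y z⟩
end
end

section
/- Let m, n be positive integers, N = m+n, and let w∘^{m,n} ∈ S_N be the permutation with w∘^{m,n}(i) = m+i for 1 ≤ i ≤ n and w∘^{m,n}(i) = i−n for n < i ≤ N. Then for every y ∈ S_N: (i) y ≤ w∘^{m,n} in the Bruhat order if and only if −n ≤ y(i) − i ≤ m for all i = 1,…,N; and (ii) y ≥ (w∘ⁿ,w∘ᵐ) in the Bruhat order if and only if n ≤ y(i) + i − 1 ≤ m + 2n for all i = 1,…,N. -/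
open Matrix

noncomputable section

/-- the permutation w∘^{m,n}: i ↦ m+i for i ≤ n (1-based), i ↦ i−n for i > n -/
def wmnPerm (m n : ℕ) : Equiv.Perm (Fin (m+n)) :=
  (fe m n).symm.trans ((Equiv.sumComm (Fin n) (Fin m)).trans finSumFinEquiv)


section Statement4Aux

open Finset List

/-- termwise comparison of equal-length sorted lists is equivalent to counting -/
lemma forall₂_iff_countP {α : Type*} [LinearOrder α] :
    ∀ (l₁ l₂ : List α), l₁.Pairwise (· ≤ ·) → l₂.Pairwise (· ≤ ·) → l₁.length = l₂.length →
      (List.Forall₂ (· ≤ ·) l₁ l₂ ↔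
        ∀ a : α, l₂.countP (fun x => decide (x ≤ a)) ≤ l₁.countP (fun x => decide (x ≤ a)))
  | [], [], _, _, _ => by simp
  | [], b :: l₂, _, _, h => by simp at h
  | a :: l₁, [], _, _, h => by simp at h
  | x :: xs, z :: zs, h₁, h₂, hl => by
    obtain ⟨hx, hxs⟩ := List.pairwise_cons.mp h₁
    obtain ⟨hz, hzs⟩ := List.pairwise_cons.mp h₂
    have hl' : xs.length = zs.length := by simpa using hl
    constructor
    · intro hf a
      rcases hf with _ | ⟨hxz, hf⟩
      have ih := (forall₂_iff_countP xs zs hxs hzs hl').mp hf a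
      rcases le_or_gt z a with h | h
      · have hxa : x ≤ a := le_trans hxz h
        rw [List.countP_cons_of_pos (by simpa using h),
          List.countP_cons_of_pos (by simpa using hxa)]
        omega
      · rw [List.countP_cons_of_neg (by simpa using not_le.mpr h)]
        exact le_trans ih (by rw [List.countP_cons]; omega)
    · intro hc
      have hxz : x ≤ z := by
        have h1 : 0 < (z :: zs).countP (fun w => decide (w ≤ z)) := by
          simp [List.countP_cons]
        have h2 := lt_of_lt_of_le h1 (hc z)
        obtain ⟨w, hw, hwz⟩ := List.countP_pos_iff.mp h2
        simp only [decide_eq_true_eq] at hwz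
        rcases List.mem_cons.mp hw with rfl | hw
        · exact hwz
        · exact le_trans (hx w hw) hwz
      refine List.Forall₂.cons hxz ((forall₂_iff_countP xs zs hxs hzs hl').mpr ?_)
      intro a
      rcases le_or_gt z a with h | h
      · have hxa : x ≤ a := le_trans hxz h
        have := hc a
        rw [List.countP_cons_of_pos (by simpa using h),
          List.countP_cons_of_pos (by simpa using hxa)] at this
        omega
      · have hz0 : zs.countP (fun w => decide (w ≤ a)) = 0 := by
          rw [List.countP_eq_zero]
          intro w hw
          simp only [decide_eq_true_eq]
          exact not_le.mpr (lt_of_lt_of_le h (hz w hw))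
        omega

lemma countP_sort {α : Type*} [LinearOrder α] (A : Finset α) (p : α → Prop) [DecidablePred p] :
    (A.sort (· ≤ ·)).countP (fun x => decide (p x)) = (A.filter p).card := by
  rw [(Finset.sort_perm_toList A (· ≤ ·)).countP_eq]
  have h1 : A.toList.countP (fun x => decide (p x)) = Multiset.countP p A.val := by
    rw [← Finset.coe_toList A, Multiset.coe_countP]
  rw [h1, Multiset.countP_eq_card_filter, ← Finset.filter_val]
  rfl

variable {N : ℕ}

/-- number of j ≤ p with w j ≤ a -/
def cntB (w : Equiv.Perm (Fin N)) (p : Fin N) (a : ℕ) : ℕ :=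
  ((Finset.Iic p).filter (fun j => ((w j : Fin N) : ℕ) ≤ a)).card

def dntB (w : Equiv.Perm (Fin N)) (p : Fin N) (a : ℕ) : ℕ :=
  (Finset.univ.filter (fun j : Fin N => (p : ℕ) < (j : ℕ) ∧ ((w j : Fin N) : ℕ) ≤ a)).card

lemma cntB_eq_filter (w : Equiv.Perm (Fin N)) (p : Fin N) (a : ℕ) :
    cntB w p a
      = (Finset.univ.filter (fun j : Fin N => (j : ℕ) ≤ (p : ℕ) ∧ ((w j : Fin N) : ℕ) ≤ a)).card := by
  unfold cntB
  congr 1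
  ext j
  simp only [Finset.mem_filter, Finset.mem_Iic, Finset.mem_univ, true_and, Fin.le_def]

lemma card_filter_interval {N : ℕ} (lo hi : ℕ) (P : Fin N → Prop) [DecidablePred P]
    (h : ∀ j : Fin N, P j ↔ lo ≤ (j : ℕ) ∧ (j : ℕ) < hi) :
    (Finset.univ.filter P).card = min hi N - lo := by
  rw [← Nat.card_Ico lo (min hi N)]
  apply Finset.card_bij (fun (j : Fin N) _ => (j : ℕ))
  · intro j hj
    simp only [Finset.mem_filter, Finset.mem_univ, true_and] at hj
    have h2 := (h j).mp hj
    have h3 := j.isLt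
    simp only [Finset.mem_Ico]
    omega
  · intro j _ j' _ e
    exact Fin.ext e
  · intro x hx
    simp only [Finset.mem_Ico] at hx
    have hxN : x < N := by omega
    refine ⟨⟨x, hxN⟩, ?_, rfl⟩
    simp only [Finset.mem_filter, Finset.mem_univ, true_and]
    exact (h _).mpr ⟨by show lo ≤ x; omega, by show x < hi; omega⟩

lemma card_filter_interval₂ {N : ℕ} (l₁ h₁ l₂ h₂ : ℕ) (hsep : h₁ ≤ l₂)
    (P : Fin N → Prop) [DecidablePred P]
    (h : ∀ j : Fin N, P j ↔ (l₁ ≤ (j : ℕ) ∧ (j : ℕ) < h₁) ∨ (l₂ ≤ (j : ℕ) ∧ (j : ℕ) < h₂)) :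
    (Finset.univ.filter P).card = (min h₁ N - l₁) + (min h₂ N - l₂) := by
  have e : Finset.univ.filter P
      = (Finset.univ.filter (fun j : Fin N => l₁ ≤ (j : ℕ) ∧ (j : ℕ) < h₁))
        ∪ (Finset.univ.filter (fun j : Fin N => l₂ ≤ (j : ℕ) ∧ (j : ℕ) < h₂)) := by
    rw [← Finset.filter_or]
    exact Finset.filter_congr (fun j _ => h j)
  rw [e, Finset.card_union_of_disjoint, card_filter_interval l₁ h₁ _ (fun j => Iff.rfl),
    card_filter_interval l₂ h₂ _ (fun j => Iff.rfl)]
  rw [Finset.disjoint_left]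
  intro j hj hj'
  simp only [Finset.mem_filter, Finset.mem_univ, true_and] at hj hj'
  omega

/-- total number of positions with value ≤ a, for a permutation -/
lemma cnt_top (w : Equiv.Perm (Fin N)) (a : ℕ) :
    (Finset.univ.filter (fun j : Fin N => ((w j : Fin N) : ℕ) ≤ a)).card = min (a + 1) N := by
  have e : Finset.univ.filter (fun j : Fin N => ((w j : Fin N) : ℕ) ≤ a)
      = (Finset.univ.filter (fun v : Fin N => (v : ℕ) ≤ a)).image w.symm := by
    ext j
    simp only [Finset.mem_filter, Finset.mem_univ, true_and, Finset.mem_image]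
    constructor
    · intro hj
      exact ⟨w j, hj, w.symm_apply_apply j⟩
    · rintro ⟨v, hv, rfl⟩
      rwa [w.apply_symm_apply]
  rw [e, Finset.card_image_of_injective _ w.symm.injective]
  exact card_filter_interval 0 (a + 1) _ (fun j => by constructor <;> intro <;> omega)

lemma cntB_add_dntB (w : Equiv.Perm (Fin N)) (p : Fin N) (a : ℕ) :
    cntB w p a + dntB w p a = min (a + 1) N := by
  rw [cntB_eq_filter, ← cnt_top w a]
  have e1 : Finset.univ.filter (fun j : Fin N => (j : ℕ) ≤ (p : ℕ) ∧ ((w j : Fin N) : ℕ) ≤ a)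
      = (Finset.univ.filter (fun j : Fin N => ((w j : Fin N) : ℕ) ≤ a)).filter
          (fun j : Fin N => (j : ℕ) ≤ (p : ℕ)) := by
    rw [Finset.filter_filter]
    exact Finset.filter_congr (fun j _ => by tauto)
  have e2 : (Finset.univ.filter (fun j : Fin N => (p : ℕ) < (j : ℕ) ∧ ((w j : Fin N) : ℕ) ≤ a))
      = (Finset.univ.filter (fun j : Fin N => ((w j : Fin N) : ℕ) ≤ a)).filter
          (fun j : Fin N => ¬ (j : ℕ) ≤ (p : ℕ)) := by
    rw [Finset.filter_filter]
    exact Finset.filter_congr (fun j _ => by constructor <;> intro <;> omega)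
  rw [e1]
  unfold dntB
  rw [e2]
  exact Finset.card_filter_add_card_filter_not _

/-- Bruhat order via counting -/
lemma bruhat_iff_cnt (y z : Equiv.Perm (Fin N)) :
    bruhatLE y z ↔ ∀ (p : Fin N) (a : ℕ), cntB z p a ≤ cntB y p a := by
  unfold bruhatLE finsetLE
  apply forall_congr'
  intro p
  have hsorted₁ := fun s => Finset.pairwise_sort (α := Fin N) s (· ≤ ·)
  have hlen : (((Finset.Iic p).image y).sort (· ≤ ·)).length
      = (((Finset.Iic p).image z).sort (· ≤ ·)).length := by
    rw [Finset.length_sort, Finset.length_sort,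
      Finset.card_image_of_injective _ y.injective, Finset.card_image_of_injective _ z.injective]
  have key : ∀ (w : Equiv.Perm (Fin N)) (a : Fin N),
      (((Finset.Iic p).image w).sort (· ≤ ·)).countP (fun x => decide (x ≤ a)) = cntB w p (a : ℕ) := by
    intro w a
    rw [countP_sort, Finset.filter_image, Finset.card_image_of_injective _ w.injective]
    unfold cntB
    congr 1
  rw [forall₂_iff_countP _ _ (hsorted₁ _) (hsorted₁ _) hlen]
  constructor
  · intro h a
    rcases lt_or_ge a N with ha | ha
    · have h2 := h ⟨a, ha⟩
      rw [key y ⟨a, ha⟩, key z ⟨a, ha⟩] at h2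
      exact h2
    · have e : ∀ (w : Equiv.Perm (Fin N)), cntB w p a = (Finset.Iic p).card := by
        intro w
        unfold cntB
        rw [Finset.filter_true_of_mem]
        intro j _
        have := ((w j : Fin N)).isLt
        omega
      simp only [e]
      exact le_rfl
  · intro h a
    rw [key, key]
    exact h (a : ℕ)

end Statement4Aux


section Statement4Vals

lemma fe_symm_apply (m n : ℕ) (i : Fin (m+n)) :
    (fe m n).symm i = if h : (i:ℕ) < n then Sum.inl ⟨(i:ℕ), h⟩
      else Sum.inr ⟨(i:ℕ) - n, by have := i.isLt; omega⟩ := by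
  apply (fe m n).injective
  rw [Equiv.apply_symm_apply]
  split
  · apply Fin.ext
    simp [fe]
  · apply Fin.ext
    simp [fe]
    have := i.isLt
    omega

lemma wmn_val (m n : ℕ) (i : Fin (m+n)) :
    ((wmnPerm m n i : Fin (m+n)) : ℕ) = if (i:ℕ) < n then m + (i:ℕ) else (i:ℕ) - n := by
  unfold wmnPerm
  rw [Equiv.trans_apply, Equiv.trans_apply, fe_symm_apply]
  split
  · simp
  · simp

lemma wnm_val (m n : ℕ) (i : Fin (m+n)) :
    ((wnmPerm m n i : Fin (m+n)) : ℕ)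
      = if (i:ℕ) < n then n - 1 - (i:ℕ) else n + m - 1 - ((i:ℕ) - n) := by
  unfold wnmPerm
  rw [Equiv.trans_apply, Equiv.trans_apply, fe_symm_apply]
  split
  · simp [fe, revP, Fin.rev]
    omega
  · simp [fe, revP, Fin.rev]
    omega

end Statement4Vals

theorem statement4 (m n : ℕ) (hm : 0 < m) (hn : 0 < n) (y : Equiv.Perm (Fin (m+n))) :
    (bruhatLE y (wmnPerm m n) ↔
      ∀ i : Fin (m+n), -(n:ℤ) ≤ ((y i : ℕ) : ℤ) - ((i : ℕ) : ℤ) ∧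
        ((y i : ℕ) : ℤ) - ((i : ℕ) : ℤ) ≤ (m:ℤ)) ∧
    (bruhatLE (wnmPerm m n) y ↔
      ∀ i : Fin (m+n), n ≤ (y i : ℕ) + (i : ℕ) + 1 ∧ (y i : ℕ) + (i : ℕ) + 1 ≤ m + 2*n) := by
  constructor
  · rw [bruhat_iff_cnt]
    constructor
    · -- (i) forward
      intro H i
      have hiN := i.isLt
      have hyiN := (y i).isLt
      have h_up : ((y i : ℕ)) ≤ (i:ℕ) + m := by
        rcases lt_or_ge (i:ℕ) n with hi | hi
        · by_contra hcon
          push_neg at hcon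
          have h1 : cntB (wmnPerm m n) i (m + (i:ℕ)) = min ((i:ℕ)+1) (m+n) - 0 := by
            rw [cntB_eq_filter]
            apply card_filter_interval
            intro j
            have hj := j.isLt
            rw [wmn_val]
            split_ifs <;> omega
          have h2 : cntB y i (m + (i:ℕ)) ≤ min (i:ℕ) (m+n) - 0 := by
            rw [cntB_eq_filter]
            rw [← card_filter_interval (N := m+n) 0 (i:ℕ)
              (fun j => (j:ℕ) < (i:ℕ)) (fun j => by omega)]
            apply Finset.card_le_card
            intro j hj
            simp only [Finset.mem_filter, Finset.mem_univ, true_and] at hj ⊢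
            rcases hj with ⟨hj1, hj2⟩
            rcases lt_or_eq_of_le hj1 with h | h
            · exact h
            · exfalso
              have hji : j = i := Fin.ext h
              rw [hji] at hj2
              omega
          have h3 := H i (m + (i:ℕ))
          omega
        · omega
      have h_lo : (i:ℕ) ≤ ((y i : ℕ)) + n := by
        rcases le_or_gt (i:ℕ) n with hi | hi
        · omega
        · by_contra hcon
          push_neg at hcon
          obtain ⟨p, hpv⟩ : ∃ p : Fin (m+n), (p:ℕ) = (i:ℕ) - 1 := ⟨⟨(i:ℕ)-1, by omega⟩, rfl⟩
          set a : ℕ := (i:ℕ) - n - 1 with ha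
          have h1 : cntB (wmnPerm m n) p a = min (i:ℕ) (m+n) - n := by
            rw [cntB_eq_filter]
            apply card_filter_interval
            intro j
            have hj := j.isLt
            rw [wmn_val]
            split_ifs <;> omega
          have hmem : i ∈ Finset.univ.filter (fun j : Fin (m+n) => ((y j : ℕ)) ≤ a) := by
            simp only [Finset.mem_filter, Finset.mem_univ, true_and]
            omega
          have h2 : cntB y p a ≤ min (a+1) (m+n) - 1 := by
            rw [cntB_eq_filter]
            calc _ ≤ ((Finset.univ.filter (fun j : Fin (m+n) => ((y j : ℕ)) ≤ a)).erase i).card := by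
                  apply Finset.card_le_card
                  intro j hj
                  simp only [Finset.mem_filter, Finset.mem_univ, true_and] at hj
                  simp only [Finset.mem_erase, Finset.mem_filter, Finset.mem_univ, true_and]
                  refine ⟨?_, hj.2⟩
                  intro hji
                  rw [hji] at hj
                  omega
              _ = min (a+1) (m+n) - 1 := by
                  rw [Finset.card_erase_of_mem hmem, cnt_top y a]
          have h3 := H p a
          omega
      omega
    · -- (i) converse
      intro H p a
      have Hn : ∀ j : Fin (m+n), ((y j : ℕ)) ≤ (j:ℕ) + m ∧ (j:ℕ) ≤ ((y j : ℕ)) + n := by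
        intro j
        obtain ⟨h1, h2⟩ := H j
        omega
      have hpN := p.isLt
      rcases lt_or_ge (p:ℕ) n with hp | hp
      · have e1 : cntB (wmnPerm m n) p a
            = ((Finset.Iic p).filter (fun j : Fin (m+n) => (j:ℕ) + m ≤ a)).card := by
          unfold cntB
          congr 1
          apply Finset.filter_congr
          intro j hj
          simp only [Finset.mem_Iic] at hj
          have hj' : (j:ℕ) ≤ (p:ℕ) := hj
          rw [wmn_val]
          split_ifs <;> omega
        rw [e1]
        unfold cntB
        apply Finset.card_le_card
        intro j hj
        simp only [Finset.mem_filter, Finset.mem_Iic] at hj ⊢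
        have h := (Hn j).1
        exact ⟨hj.1, by omega⟩
      · have e_tot := cntB_add_dntB y p a
        have e_dnt : dntB y p a ≤ min (n+a+1) (m+n) - ((p:ℕ)+1) := by
          unfold dntB
          rw [← card_filter_interval (N := m+n) ((p:ℕ)+1) (n+a+1)
            (fun j => (p:ℕ) < (j:ℕ) ∧ (j:ℕ) ≤ n + a) (fun j => by omega)]
          apply Finset.card_le_card
          intro j hj
          simp only [Finset.mem_filter, Finset.mem_univ, true_and] at hj ⊢
          have h := (Hn j).2
          exact ⟨hj.1, by omega⟩
        have e_wmn : cntB (wmnPerm m n) p a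
            = (min (min n (a+1-m)) (m+n) - 0) + (min (min ((p:ℕ)+1) (n+a+1)) (m+n) - n) := by
          rw [cntB_eq_filter]
          apply card_filter_interval₂ 0 (min n (a+1-m)) n (min ((p:ℕ)+1) (n+a+1)) (by omega)
          intro j
          have hj := j.isLt
          rw [wmn_val]
          split_ifs <;> omega
        omega
  · rw [bruhat_iff_cnt]
    constructor
    · -- (ii) forward
      intro H i
      have hiN := i.isLt
      have hyiN := (y i).isLt
      have h_lo : n ≤ ((y i : ℕ)) + (i:ℕ) + 1 := by
        rcases le_or_gt n ((i:ℕ)+1) with hi | hi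
        · omega
        · by_contra hcon
          push_neg at hcon
          set a : ℕ := n - 2 - (i:ℕ) with ha
          have h1 : cntB (wnmPerm m n) i a = min 0 (m+n) - 0 := by
            rw [cntB_eq_filter]
            apply card_filter_interval
            intro j
            have hj := j.isLt
            rw [wnm_val]
            split_ifs <;> omega
          have h2 : 0 < cntB y i a := by
            unfold cntB
            apply Finset.card_pos.mpr
            refine ⟨i, ?_⟩
            simp only [Finset.mem_filter, Finset.mem_Iic]
            exact ⟨le_refl i, by omega⟩
          have h3 := H i a
          omega
      have h_up : ((y i : ℕ)) + (i:ℕ) + 1 ≤ m + 2*n := by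
        by_contra hcon
        push_neg at hcon
        have hi : n + 1 ≤ (i:ℕ) := by omega
        obtain ⟨p, hpv⟩ : ∃ p : Fin (m+n), (p:ℕ) = (i:ℕ) - 1 := ⟨⟨(i:ℕ)-1, by omega⟩, rfl⟩
        set a : ℕ := 2*n + m - 1 - (i:ℕ) with ha
        have h1 : dntB (wnmPerm m n) p a = min (m+n) (m+n) - (i:ℕ) := by
          unfold dntB
          apply card_filter_interval
          intro j
          have hj := j.isLt
          rw [wnm_val]
          split_ifs <;> omega
        have hmem : i ∈ Finset.univ.filter (fun j : Fin (m+n) => (p:ℕ) < (j:ℕ)) := by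
          simp only [Finset.mem_filter, Finset.mem_univ, true_and]
          omega
        have h2 : dntB y p a ≤ min (m+n) (m+n) - (i:ℕ) - 1 := by
          unfold dntB
          calc _ ≤ ((Finset.univ.filter (fun j : Fin (m+n) => (p:ℕ) < (j:ℕ))).erase i).card := by
                apply Finset.card_le_card
                intro j hj
                simp only [Finset.mem_filter, Finset.mem_univ, true_and] at hj
                simp only [Finset.mem_erase, Finset.mem_filter, Finset.mem_univ, true_and]
                refine ⟨?_, hj.1⟩
                intro hji
                rw [hji] at hj
                omega
            _ = (Finset.univ.filter (fun j : Fin (m+n) => (p:ℕ) < (j:ℕ))).card - 1 :=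
                Finset.card_erase_of_mem hmem
            _ ≤ min (m+n) (m+n) - (i:ℕ) - 1 := by
                rw [card_filter_interval ((p:ℕ)+1) (m+n) _ (fun j => by have := j.isLt; omega)]
                omega
        have h3 := cntB_add_dntB y p a
        have h4 := cntB_add_dntB (wnmPerm m n) p a
        have h5 := H p a
        omega
      exact ⟨h_lo, h_up⟩
    · -- (ii) converse
      intro H p a
      have hpN := p.isLt
      rcases lt_or_ge (p:ℕ) n with hp | hp
      · have e1 : cntB (wnmPerm m n) p a
            = ((Finset.Iic p).filter (fun j : Fin (m+n) => n ≤ (j:ℕ) + a + 1)).card := by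
          unfold cntB
          congr 1
          apply Finset.filter_congr
          intro j hj
          simp only [Finset.mem_Iic] at hj
          have hj' : (j:ℕ) ≤ (p:ℕ) := hj
          rw [wnm_val]
          split_ifs <;> omega
        rw [e1]
        unfold cntB
        apply Finset.card_le_card
        intro j hj
        simp only [Finset.mem_filter, Finset.mem_Iic] at hj ⊢
        have h := (H j).1
        exact ⟨hj.1, by omega⟩
      · have e_tot := cntB_add_dntB y p a
        have eE : min (m+n) (m+n) - max ((p:ℕ)+1) (2*n+m-1-a) ≤ dntB y p a := by
          rw [← card_filter_interval (N := m+n) (max ((p:ℕ)+1) (2*n+m-1-a)) (m+n)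
            (fun j => (p:ℕ) < (j:ℕ) ∧ 2*n+m ≤ a + (j:ℕ) + 1)
            (fun j => by have := j.isLt; omega)]
          apply Finset.card_le_card
          intro j hj
          simp only [Finset.mem_filter, Finset.mem_univ, true_and] at hj ⊢
          have h := (H j).2
          exact ⟨hj.1, by omega⟩
        have e_wnm : cntB (wnmPerm m n) p a
            = (min n (m+n) - (n-1-a)) + (min ((p:ℕ)+1) (m+n) - max n (2*n+m-1-a)) := by
          rw [cntB_eq_filter]
          apply card_filter_interval₂ (n-1-a) n (max n (2*n+m-1-a)) ((p:ℕ)+1) (by omega)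
          intro j
          have hj := j.isLt
          rw [wnm_val]
          split_ifs <;> omega
        omega
end
end

section
/- Let w ∈ S_N with w ≥ (w∘ⁿ,w∘ᵐ) in the Bruhat order, and write the permutation matrix of w in block form w = [[w₁₁, w₁₂],[w₂₁, w₂₂]] with w₁₁ ∈ M_n(ℂ), w₁₂ ∈ M_{n,m}(ℂ), w₂₁ ∈ M_{m,n}(ℂ), w₂₂ ∈ M_m(ℂ). Then P_w ⊆ B_m⁺ w₂₁ B_n⁺ ∩ B_m⁻ (w∘ᵐ w₁₂ᵀ w∘ⁿ) B_n⁻. -/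
open Matrix

noncomputable section

def castTop {m n : ℕ} (i : Fin n) : Fin (m+n) := Fin.castLE (Nat.le_add_left n m) i

def castBot {m n : ℕ} (i : Fin m) : Fin (m+n) := ⟨n + (i:ℕ), by have := i.isLt; omega⟩

/-- upper-right n×m block -/
def blk12 (m n : ℕ) (g : Mat (m+n) (m+n)) : Mat n m := g.submatrix castTop castBot
/-- lower-left m×n block -/
def blk21 (m n : ℕ) (g : Mat (m+n) (m+n)) : Mat m n := g.submatrix castBot castTop

-- test basic lemmas
lemma fe_inl (m n : ℕ) (i : Fin n) : fe m n (Sum.inl i) = castTop i := by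
  apply Fin.ext; simp [fe, castTop]

lemma fe_inr (m n : ℕ) (j : Fin m) : fe m n (Sum.inr j) = castBot j := by
  apply Fin.ext; simp [fe, castBot]; omega

lemma revP_inv (k : ℕ) : (revP k)⁻¹ = revP k := rfl

lemma revP_mul (k : ℕ) : revP k * revP k = 1 := by
  ext i; simp [revP, Equiv.Perm.mul_apply, Fin.rev_rev]

lemma permMat_mul_apply {k : ℕ} (w : Equiv.Perm (Fin k)) (M : Mat k k) (i : Fin k) (j : Fin k) :
    (permMat k w * M) i j = M (w⁻¹ i) j := by
  simp only [Matrix.mul_apply, permMat]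
  rw [Finset.sum_eq_single (w⁻¹ i)]
  · simp
  · intro b _ hb
    rw [if_neg, zero_mul]
    intro h; exact hb (by rw [h]; simp)
  · simp

lemma mul_permMat_apply {k l : ℕ} (w : Equiv.Perm (Fin k)) (M : Mat l k) (i : Fin l) (j : Fin k) :
    (M * permMat k w) i j = M i (w j) := by
  simp only [Matrix.mul_apply, permMat]
  rw [Finset.sum_eq_single (w j)]
  · simp
  · intro b _ hb; rw [if_neg hb, mul_zero]
  · simp

lemma permMat_mul_permMat {k : ℕ} (v w : Equiv.Perm (Fin k)) :
    permMat k v * permMat k w = permMat k (v * w) := by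
  ext i j
  rw [permMat_mul_apply]
  simp only [permMat, Equiv.Perm.mul_apply]
  congr 1
  simp only [eq_iff_iff]
  constructor
  · intro h; rw [← h]; simp
  · intro h; rw [h]; simp

lemma permMat_one (k : ℕ) : permMat k 1 = 1 := by
  ext i j; simp [permMat, Matrix.one_apply]
  exact if_congr Iff.rfl rfl rfl

lemma permMat_self_inv {k : ℕ} (w : Equiv.Perm (Fin k)) :
    permMat k w * permMat k w⁻¹ = 1 := by
  rw [permMat_mul_permMat, mul_inv_cancel, permMat_one]

lemma isUnit_permMat {k : ℕ} (w : Equiv.Perm (Fin k)) : IsUnit (permMat k w) :=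
  ⟨⟨permMat k w, permMat k w⁻¹, permMat_self_inv w,
    by rw [permMat_mul_permMat, inv_mul_cancel, permMat_one]⟩, rfl⟩

lemma permMat_rev_sq (k : ℕ) : permMat k (revP k) * permMat k (revP k) = 1 := by
  rw [permMat_mul_permMat, revP_mul, permMat_one]

lemma sum_split {m n : ℕ} {α : Type*} [AddCommMonoid α] (f : Fin (m+n) → α) :
    ∑ k, f k = (∑ i : Fin n, f (castTop i)) + ∑ j : Fin m, f (castBot j) := by
  rw [← Equiv.sum_comp (fe m n) f, Fintype.sum_sum_type]
  simp only [fe_inl, fe_inr]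

def blkTT (m n : ℕ) (g : Mat (m+n) (m+n)) : Mat n n := g.submatrix castTop castTop
def blkBB (m n : ℕ) (g : Mat (m+n) (m+n)) : Mat m m := g.submatrix castBot castBot

lemma blk21_mul {m n : ℕ} (g h : Mat (m+n) (m+n)) :
    blk21 m n (g * h) = blk21 m n g * blkTT m n h + blkBB m n g * blk21 m n h := by
  ext i j
  simp only [blk21, blkTT, blkBB, Matrix.submatrix_apply, Matrix.add_apply, Matrix.mul_apply]
  rw [sum_split (m := m) (n := n)]

lemma castTop_lt_castTop {m n : ℕ} {i j : Fin n} : (castTop (m:=m) i < castTop j) ↔ i < j := by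
  simp only [castTop, Fin.lt_def, Fin.coe_castLE]

lemma castBot_lt_castBot {m n : ℕ} {i j : Fin m} : (castBot (n:=n) i < castBot j) ↔ i < j := by
  simp only [castBot, Fin.lt_def]
  omega

lemma castTop_lt_castBot {m n : ℕ} (i : Fin n) (j : Fin m) :
    castTop (m:=m) i < castBot j := by
  simp only [castTop, castBot, Fin.lt_def, Fin.coe_castLE]
  have := i.isLt; omega

lemma blk21_of_Bp {m n : ℕ} {b : Mat (m+n) (m+n)} (hb : b ∈ Bp (m+n)) :
    blk21 m n b = 0 := by
  ext i j
  exact hb.2 _ _ (castTop_lt_castBot j i)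

lemma Bp_diag_ne_zero {k : ℕ} {b : Mat k k} (hb : b ∈ Bp k) (i : Fin k) : b i i ≠ 0 := by
  have h1 : IsUnit b.det := (Matrix.isUnit_iff_isUnit_det b).mp hb.1
  rw [Matrix.det_of_upperTriangular (fun i j h => hb.2 i j h)] at h1
  intro h0
  rw [Finset.prod_eq_zero (Finset.mem_univ i) (f := fun j => b j j) h0] at h1
  simp at h1

lemma blkTT_mem_Bp {m n : ℕ} {b : Mat (m+n) (m+n)} (hb : b ∈ Bp (m+n)) :
    blkTT m n b ∈ Bp n := by
  have tri : ∀ i j : Fin n, j < i → blkTT m n b i j = 0 := by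
    intro i j h
    exact hb.2 _ _ (castTop_lt_castTop.mpr h)
  refine ⟨?_, tri⟩
  rw [Matrix.isUnit_iff_isUnit_det, Matrix.det_of_upperTriangular (fun i j h => tri i j h),
    isUnit_iff_ne_zero]
  exact Finset.prod_ne_zero_iff.mpr fun i _ => Bp_diag_ne_zero hb _

lemma blkBB_mem_Bp {m n : ℕ} {b : Mat (m+n) (m+n)} (hb : b ∈ Bp (m+n)) :
    blkBB m n b ∈ Bp m := by
  have tri : ∀ i j : Fin m, j < i → blkBB m n b i j = 0 := by
    intro i j h
    exact hb.2 _ _ (castBot_lt_castBot.mpr h)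
  refine ⟨?_, tri⟩
  rw [Matrix.isUnit_iff_isUnit_det, Matrix.det_of_upperTriangular (fun i j h => tri i j h),
    isUnit_iff_ne_zero]
  exact Finset.prod_ne_zero_iff.mpr fun i _ => Bp_diag_ne_zero hb _

lemma Bp_inv {k : ℕ} {b : Mat k k} (hb : b ∈ Bp k) : b⁻¹ ∈ Bp k := by
  have hdet : IsUnit b.det := (Matrix.isUnit_iff_isUnit_det b).mp hb.1
  haveI : Invertible b := b.invertibleOfIsUnitDet hdet
  refine ⟨⟨⟨b⁻¹, b, Matrix.nonsing_inv_mul b hdet, Matrix.mul_nonsing_inv b hdet⟩, rfl⟩, ?_⟩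
  intro i j h
  exact Matrix.blockTriangular_inv_of_blockTriangular (fun i j h => hb.2 i j h) h

lemma mul_nonsing_inv' {k : ℕ} {b : Mat k k} (hb : IsUnit b) : b * b⁻¹ = 1 :=
  Matrix.mul_nonsing_inv b ((Matrix.isUnit_iff_isUnit_det b).mp hb)

lemma nonsing_inv_mul' {k : ℕ} {b : Mat k k} (hb : IsUnit b) : b⁻¹ * b = 1 :=
  Matrix.nonsing_inv_mul b ((Matrix.isUnit_iff_isUnit_det b).mp hb)

lemma conj_rev_apply {k : ℕ} (c : Mat k k) (i j : Fin k) :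
    (permMat k (revP k) * c * permMat k (revP k)) i j = c (revP k i) (revP k j) := by
  rw [mul_permMat_apply, permMat_mul_apply, revP_inv]

lemma conj_Bp_mem_Bm {k : ℕ} {c : Mat k k} (hc : c ∈ Bp k) :
    permMat k (revP k) * c * permMat k (revP k) ∈ Bm k := by
  refine ⟨((isUnit_permMat _).mul hc.1).mul (isUnit_permMat _), ?_⟩
  intro i j hij
  rw [conj_rev_apply]
  exact hc.2 _ _ (by simpa [revP] using Fin.rev_lt_rev.mpr hij)

lemma neg_mem_Bm {k : ℕ} {c : Mat k k} (hc : c ∈ Bm k) : -c ∈ Bm k :=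
  ⟨hc.1.neg, fun i j h => by simp [hc.2 i j h]⟩

lemma fe_symm_top {m n : ℕ} (i : Fin n) : (fe m n).symm (castTop i) = Sum.inl i := by
  rw [Equiv.symm_apply_eq, fe_inl]

lemma fe_symm_bot {m n : ℕ} (j : Fin m) : (fe m n).symm (castBot j) = Sum.inr j := by
  rw [Equiv.symm_apply_eq, fe_inr]

lemma blk21_embMat (m n : ℕ) (x : Mat m n) : blk21 m n (embMat m n x) = x := by
  ext i j
  simp [blk21, embMat, Matrix.reindex_apply, Matrix.submatrix_apply, fe_symm_top, fe_symm_bot]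

lemma cancel_sq {k l : ℕ} (P : Mat k k) (hP : P * P = 1)
    (z : Matrix (Fin k) (Fin l) ℂ) : P * (P * z) = z := by
  rw [← Matrix.mul_assoc, hP, Matrix.one_mul]

lemma embMat_mul_inv {m n : ℕ} (x : Mat m n) :
    embMat m n x *
      embMat m n (-(permMat m (revP m) * x * permMat n (revP n))) = 1 := by
  rw [embMat, embMat, ← Matrix.reindexAlgEquiv_apply ℂ ℂ, ← Matrix.reindexAlgEquiv_apply ℂ ℂ,
    ← _root_.map_mul, Matrix.fromBlocks_multiply]
  have h21 : x * permMat n (revP n) +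
      permMat m (revP m) * (-(permMat m (revP m) * x * permMat n (revP n))) = 0 := by
    rw [Matrix.mul_neg, Matrix.mul_assoc, cancel_sq _ (permMat_rev_sq m)]
    exact add_neg_cancel _
  rw [h21, permMat_rev_sq, permMat_rev_sq]
  simp only [Matrix.mul_zero, Matrix.zero_mul, add_zero, zero_add]
  rw [Matrix.fromBlocks_one, _root_.map_one]

lemma blk21_permMat_inv {m n : ℕ} (w : Equiv.Perm (Fin (m+n))) :
    blk21 m n (permMat (m+n) w⁻¹) = (blk12 m n (permMat (m+n) w)).transpose := by
  ext i j
  simp only [blk21, blk12, Matrix.submatrix_apply, Matrix.transpose_apply, permMat]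
  congr 1
  simp only [eq_iff_iff]
  constructor
  · intro h; rw [h]; simp
  · intro h; rw [h]; simp

theorem statement8' (m n : ℕ)
    (w : Equiv.Perm (Fin (m+n)))
    (w12 : Mat n m) (h12 : w12 = blk12 m n (permMat (m+n) w))
    (w21 : Mat m n) (h21 : w21 = blk21 m n (permMat (m+n) w))
    (x : Mat m n) (b b' : Mat (m+n) (m+n)) (hb : b ∈ Bp (m+n)) (hb' : b' ∈ Bp (m+n))
    (heq : embMat m n x = b * permMat (m+n) w * b') :
    (∃ c ∈ Bp m, ∃ c' ∈ Bp n, x = c * w21 * c') ∧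
    (∃ c ∈ Bm m, ∃ c' ∈ Bm n,
      x = c * (permMat m (revP m) * w12.transpose * permMat n (revP n)) * c') := by
  constructor
  · refine ⟨blkBB m n b, blkBB_mem_Bp hb, blkTT m n b', blkTT_mem_Bp hb', ?_⟩
    have h1 : x = blk21 m n (embMat m n x) := (blk21_embMat m n x).symm
    rw [h1, heq, blk21_mul, blk21_mul, blk21_of_Bp hb, blk21_of_Bp hb',
      Matrix.zero_mul, Matrix.mul_zero, add_zero, zero_add, h21, Matrix.mul_assoc]
  · set Pn := permMat n (revP n) with hPn
    set Pm := permMat m (revP m) with hPm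
    set y : Mat m n := -(Pm * x * Pn) with hy
    set W' : Mat (m+n) (m+n) := permMat (m+n) w⁻¹ with hW'
    have key : embMat m n x * embMat m n y = 1 := embMat_mul_inv x
    have hW'W : W' * permMat (m+n) w = 1 := by
      rw [hW', permMat_mul_permMat, inv_mul_cancel, permMat_one]
    have hbi' : b⁻¹ * b = 1 := nonsing_inv_mul' hb.1
    have hbj' : b'⁻¹ * b' = 1 := nonsing_inv_mul' hb'.1
    have hLA : (b'⁻¹ * W' * b⁻¹) * (b * permMat (m+n) w * b') = 1 := by
      calc (b'⁻¹ * W' * b⁻¹) * (b * permMat (m+n) w * b')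
          = b'⁻¹ * (W' * ((b⁻¹ * b) * (permMat (m+n) w * b'))) := by
            simp only [Matrix.mul_assoc]
        _ = 1 := by
            rw [hbi', Matrix.one_mul, ← Matrix.mul_assoc W', hW'W, Matrix.one_mul, hbj']
    have hE : embMat m n y = b'⁻¹ * W' * b⁻¹ := by
      calc embMat m n y = 1 * embMat m n y := (Matrix.one_mul _).symm
        _ = ((b'⁻¹ * W' * b⁻¹) * embMat m n x) * embMat m n y := by rw [heq, hLA]
        _ = (b'⁻¹ * W' * b⁻¹) * (embMat m n x * embMat m n y) := by
            rw [Matrix.mul_assoc]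
        _ = b'⁻¹ * W' * b⁻¹ := by rw [key, Matrix.mul_one]
    have hcm : blkBB m n b'⁻¹ ∈ Bp m := blkBB_mem_Bp (Bp_inv hb')
    have hcn : blkTT m n b⁻¹ ∈ Bp n := blkTT_mem_Bp (Bp_inv hb)
    have hblk : y = blkBB m n b'⁻¹ * w12.transpose * blkTT m n b⁻¹ := by
      have h2 := congrArg (blk21 m n) hE
      rw [blk21_embMat] at h2
      rw [h2, blk21_mul, blk21_mul, blk21_of_Bp (Bp_inv hb), blk21_of_Bp (Bp_inv hb'),
        Matrix.zero_mul, Matrix.mul_zero, add_zero, zero_add, hW', blk21_permMat_inv, ← h12]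
    refine ⟨-(Pm * blkBB m n b'⁻¹ * Pm), neg_mem_Bm (conj_Bp_mem_Bm hcm),
      Pn * blkTT m n b⁻¹ * Pn, conj_Bp_mem_Bm hcn, ?_⟩
    have h3 : Pm * (Pm * x * Pn) * Pn = x := by
      simp only [Matrix.mul_assoc]
      rw [permMat_rev_sq, Matrix.mul_one, cancel_sq _ (permMat_rev_sq m)]
    have hx2 : x = -(Pm * (blkBB m n b'⁻¹ * w12.transpose * blkTT m n b⁻¹) * Pn) := by
      rw [← hblk, hy, Matrix.mul_neg, Matrix.neg_mul, h3, neg_neg]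
    rw [hx2, Matrix.neg_mul, Matrix.neg_mul, neg_inj]
    simp only [Matrix.mul_assoc]
    rw [cancel_sq Pm (permMat_rev_sq m), cancel_sq Pn (permMat_rev_sq n)]

theorem statement8 (m n : ℕ) (hm : 0 < m) (hn : 0 < n)
    (w : Equiv.Perm (Fin (m+n))) (hw : bruhatLE (wnmPerm m n) w)
    (w12 : Mat n m) (h12 : w12 = blk12 m n (permMat (m+n) w))
    (w21 : Mat m n) (h21 : w21 = blk21 m n (permMat (m+n) w)) :
    Pset m n w ⊆
      dcPlus w21 ∩ dcMinus (permMat m (revP m) * w12.transpose * permMat n (revP n)) := by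
  intro x hx
  obtain ⟨b, hb, b', hb', heq⟩ := hx
  exact statement8' m n w w12 h12 w21 h21 x b b' hb hb' heq
end
end

section
/- Let n be a positive integer, 0 ≤ t ≤ n, and u, v ∈ S_n. (a) If u(t+1) < ⋯ < u(n) and v ≤ u in the Bruhat order, then v(j) ≥ u(j) for all j = t+1,…,n. (b) If v(1) < ⋯ < v(t) and v(j) ≥ u(j) for all j = t+1,…,n, then v ≤ u in the Bruhat order. -/
open Matrix

noncomputable section

section ListLemmas
variable {α : Type*} [LinearOrder α] {c : α}

lemma countP_mono_forall₂ {a b : List α} (h : List.Forall₂ (· ≤ ·) a b) (c : α) :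
    b.countP (fun x => x ≤ c) ≤ a.countP (fun x => x ≤ c) := by
  induction h with
  | nil => simp
  | @cons x y a' b' hxy _ ih =>
      simp only [List.countP_cons]
      by_cases hyc : y ≤ c
      · rw [if_pos (show (decide (y ≤ c)) = true by simpa using hyc), if_pos (show (decide (x ≤ c)) = true by simpa using le_trans hxy hyc)]
        omega
      · rw [if_neg (by simpa using hyc)]
        split <;> omega

lemma L1 : ∀ {a : List α}, a.Pairwise (· ≤ ·) → ∀ {i : ℕ} (h : i < a.length),
    a.get ⟨i, h⟩ ≤ c → i + 1 ≤ a.countP (fun x => x ≤ c)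
  | [], _, i, h => by simp at h
  | x :: a', hs, 0, h => by
      intro hxc
      simp only [List.get] at hxc
      simp [List.countP_cons, hxc]
  | x :: a', hs, (i+1), h => by
      intro hic
      have h' : i < a'.length := by simpa using h
      have hgc : a'.get ⟨i, h'⟩ ≤ c := by simpa using hic
      have ih := L1 hs.of_cons h' hgc
      have hx : x ≤ c := le_trans (List.rel_of_pairwise_cons hs (List.get_mem a' ⟨i, h'⟩)) hgc
      simp only [List.countP_cons]
      rw [if_pos (by simpa using hx)]
      omega

lemma L2 : ∀ {a : List α}, a.Pairwise (· ≤ ·) → ∀ {i : ℕ} (h : i < a.length),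
    i + 1 ≤ a.countP (fun x => x ≤ c) → a.get ⟨i, h⟩ ≤ c
  | [], _, i, h => by simp at h
  | x :: a', hs, 0, h => by
      intro hcount
      show x ≤ c
      by_contra hxc
      push_neg at hxc
      have h0 : (x :: a').countP (fun x => x ≤ c) = 0 := by
        refine List.countP_eq_zero.mpr fun y hy => ?_
        simp only [decide_eq_true_eq, not_le]
        rcases List.mem_cons.mp hy with rfl | hy'
        · exact hxc
        · exact lt_of_lt_of_le hxc (List.rel_of_pairwise_cons hs hy')
      omega
  | x :: a', hs, (i+1), h => by
      intro hcount
      have h' : i < a'.length := by simpa using h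
      have : i + 1 ≤ a'.countP (fun x => x ≤ c) := by
        simp only [List.countP_cons] at hcount
        split at hcount <;> omega
      simpa using L2 hs.of_cons h' this

lemma forall₂_of_countP {a b : List α} (ha : a.Pairwise (· ≤ ·)) (hb : b.Pairwise (· ≤ ·))
    (hlen : a.length = b.length)
    (h : ∀ c, b.countP (fun x => x ≤ c) ≤ a.countP (fun x => x ≤ c)) :
    List.Forall₂ (· ≤ ·) a b := by
  rw [List.forall₂_iff_get]
  exact ⟨hlen, fun i h₁ h₂ => L2 ha h₁ (le_trans (L1 hb h₂ le_rfl) (h _))⟩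

end ListLemmas

section FinsetLemmas
open Finset

variable {k : ℕ}

lemma sort_countP (A : Finset (Fin k)) (c : Fin k) :
    (A.sort (· ≤ ·)).countP (fun x => x ≤ c) = (A.filter (· ≤ c)).card := by
  rw [(Finset.sort_perm_toList (r := (· ≤ ·)) (s := A)).countP_eq]
  have h1 : (A.filter (· ≤ c)).card = Multiset.countP (· ≤ c) A.1 := by
    rw [Finset.card, Finset.filter_val, Multiset.countP_eq_card_filter]
  have h2 : A.1 = ↑A.toList := (Multiset.coe_toList A.1).symm
  rw [h1, h2, Multiset.coe_countP]

end FinsetLemmas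

lemma finsetLE_iff {A B : Finset (Fin k)} (hcard : A.card = B.card) :
    finsetLE A B ↔ ∀ c, (B.filter (· ≤ c)).card ≤ (A.filter (· ≤ c)).card := by
  constructor
  · intro h c
    rw [← sort_countP, ← sort_countP]
    exact countP_mono_forall₂ h c
  · intro h
    refine forall₂_of_countP (Finset.pairwise_sort _ _) (Finset.pairwise_sort _ _) ?_ ?_
    · rw [Finset.length_sort, Finset.length_sort, hcard]
    · intro c
      rw [sort_countP, sort_countP]
      exact h c

lemma bruhatLE_iff (y z : Equiv.Perm (Fin k)) :
    bruhatLE y z ↔ ∀ p c : Fin k,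
      ((Finset.Iic p).filter (fun i => z i ≤ c)).card
        ≤ ((Finset.Iic p).filter (fun i => y i ≤ c)).card := by
  have him : ∀ (w : Equiv.Perm (Fin k)) (p c : Fin k),
      (((Finset.Iic p).image w).filter (· ≤ c)).card
        = ((Finset.Iic p).filter (fun i => w i ≤ c)).card := by
    intro w p c
    rw [Finset.filter_image, Finset.card_image_of_injective _ w.injective]
  have hc : ∀ (w : Equiv.Perm (Fin k)) (p : Fin k),
      ((Finset.Iic p).image w).card = ((Finset.Iic p)).card := fun w p =>
    Finset.card_image_of_injective _ w.injective
  constructor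
  · intro h p c
    have := (finsetLE_iff (by rw [hc, hc])).mp (h p) c
    rwa [him, him] at this
  · intro h p
    refine (finsetLE_iff (by rw [hc, hc])).mpr fun c => ?_
    rw [him, him]; exact h p c

lemma card_univ_filter (w : Equiv.Perm (Fin k)) (c : Fin k) :
    (Finset.univ.filter (fun i => w i ≤ c)).card = (c : ℕ) + 1 := by
  have : Finset.univ.filter (fun i => w i ≤ c) = (Finset.Iic c).image w.symm := by
    ext i
    simp only [Finset.mem_filter, Finset.mem_univ, true_and, Finset.mem_image, Finset.mem_Iic]
    constructor
    · intro h; exact ⟨w i, h, (w.symm_apply_apply i)⟩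
    · rintro ⟨a, ha, rfl⟩; simpa using ha
  rw [this, Finset.card_image_of_injective _ w.symm.injective, Fin.card_Iic]

lemma card_split (w : Equiv.Perm (Fin k)) (c : Fin k) (q : Fin k → Prop) [DecidablePred q] :
    (Finset.univ.filter (fun i => q i ∧ w i ≤ c)).card
      + (Finset.univ.filter (fun i => ¬ q i ∧ w i ≤ c)).card = (c : ℕ) + 1 := by
  have h1 : Finset.univ.filter (fun i => q i ∧ w i ≤ c)
      = (Finset.univ.filter (fun i => w i ≤ c)).filter q := by
    ext i; simp; tauto
  have h2 : Finset.univ.filter (fun i => ¬ q i ∧ w i ≤ c)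
      = (Finset.univ.filter (fun i => w i ≤ c)).filter (fun i => ¬ q i) := by
    ext i; simp; tauto
  rw [h1, h2, Finset.card_filter_add_card_filter_not, card_univ_filter]

section Statement11Proof
open Finset

theorem statement11 (n t : ℕ) (hn : 0 < n) (ht : t ≤ n) (u v : Equiv.Perm (Fin n)) :
    -- (a)
    (tailMono t u → bruhatLE v u → ∀ j : Fin n, t ≤ (j:ℕ) → u j ≤ v j) ∧
    -- (b)
    (headMono t v → (∀ j : Fin n, t ≤ (j:ℕ) → u j ≤ v j) → bruhatLE v u) := by
  constructor
  · -- (a)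
    intro hu hvu j hj
    by_contra hcon
    push_neg at hcon
    set c := v j with hc
    have hS : ∀ i : Fin n, u i ≤ c → (i:ℕ) < (j:ℕ) := by
      intro i hi
      by_contra hij
      push_neg at hij
      rcases eq_or_lt_of_le hij with heq | hlt
      · have : j = i := Fin.ext heq
        subst this
        exact absurd hi (not_le.mpr hcon)
      · have hlt' : j < i := Fin.lt_def.mpr hlt
        have := hu j i hlt' hj
        exact absurd hi (not_le.mpr (lt_trans hcon this))
    have hcardS : (Finset.univ.filter (fun i => u i ≤ c)).card = (c:ℕ)+1 := card_univ_filter u c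
    have hjpos : (c:ℕ) + 1 ≤ (j:ℕ) := by
      have hsub : Finset.univ.filter (fun i => u i ≤ c)
          ⊆ Finset.Iio j := by
        intro i hi
        simp only [Finset.mem_filter, Finset.mem_univ, true_and] at hi
        simp only [Finset.mem_Iio, Fin.lt_def]
        exact hS i hi
      have hle := Finset.card_le_card hsub
      rw [hcardS, Fin.card_Iio] at hle
      exact hle
    set p : Fin n := ⟨(j:ℕ)-1, lt_of_le_of_lt (Nat.sub_le _ _) j.isLt⟩ with hp
    have hIic : ∀ i : Fin n, i ≤ p ↔ (i:ℕ) < (j:ℕ) := by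
      intro i
      rw [Fin.le_def]
      simp only [hp]
      omega
    have h1 : ((Finset.Iic p).filter (fun i => u i ≤ c)).card = (c:ℕ)+1 := by
      rw [← hcardS]
      congr 1
      ext i
      simp only [Finset.mem_filter, Finset.mem_Iic, Finset.mem_univ, true_and]
      constructor
      · exact fun h => h.2
      · exact fun h => ⟨(hIic i).mpr (hS i h), h⟩
    have h2 : ((Finset.Iic p).filter (fun i => v i ≤ c)).card ≤ (c:ℕ) := by
      have hsub : (Finset.Iic p).filter (fun i => v i ≤ c)
          ⊆ (Finset.univ.filter (fun i => v i ≤ c)).erase j := by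
        intro i hi
        simp only [Finset.mem_filter, Finset.mem_Iic] at hi
        refine Finset.mem_erase.mpr ⟨?_, by simp [hi.2]⟩
        intro hij
        subst hij
        have := (hIic i).mp hi.1
        omega
      have hle := Finset.card_le_card hsub
      rw [Finset.card_erase_of_mem (by simp [hc]), card_univ_filter] at hle
      omega
    have := (bruhatLE_iff v u).mp hvu p c
    omega
  · -- (b)
    intro hv h2
    rw [bruhatLE_iff]
    intro p c
    by_cases hpt : t ≤ (p:ℕ)+1
    · have hiic : ∀ w : Equiv.Perm (Fin n),
          Finset.univ.filter (fun i => i ≤ p ∧ w i ≤ c)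
            = (Finset.Iic p).filter (fun i => w i ≤ c) := by
        intro w; ext i; simp [Finset.mem_Iic, and_comm]
      have c1 := card_split u c (fun i => i ≤ p)
      have c2 := card_split v c (fun i => i ≤ p)
      rw [hiic u] at c1
      rw [hiic v] at c2
      have hTsub : Finset.univ.filter (fun i => ¬ i ≤ p ∧ v i ≤ c)
          ⊆ Finset.univ.filter (fun i => ¬ i ≤ p ∧ u i ≤ c) := by
        intro i hi
        simp only [Finset.mem_filter, Finset.mem_univ, true_and, not_le] at hi ⊢
        obtain ⟨hip, hvc⟩ := hi
        have hti : t ≤ (i:ℕ) := by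
          have := Fin.lt_def.mp hip
          omega
        exact ⟨hip, le_trans (h2 i hti) hvc⟩
      have hcle := Finset.card_le_card hTsub
      omega
    · push_neg at hpt
      set Hv := Finset.univ.filter (fun i : Fin n => (i:ℕ) < t ∧ v i ≤ c) with hHv
      have hdc : ∀ x ∈ Hv, ∀ i : Fin n, i ≤ x → i ∈ Hv := by
        intro x hx i hix
        simp only [hHv, Finset.mem_filter, Finset.mem_univ, true_and] at hx ⊢
        obtain ⟨hxt, hxc⟩ := hx
        rcases eq_or_lt_of_le hix with rfl | hlt
        · exact ⟨hxt, hxc⟩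
        · refine ⟨by have := Fin.lt_def.mp hlt; omega, ?_⟩
          exact le_trans (le_of_lt (hv i x hlt hxt)) hxc
      by_cases hm : (p:ℕ)+1 ≤ Hv.card
      · have hall : ∀ i : Fin n, i ≤ p → v i ≤ c := by
          intro i hip
          by_contra hic
          have hsub : Hv ⊆ Finset.Iio i := by
            intro x hx
            simp only [Finset.mem_Iio]
            by_contra hxi
            push_neg at hxi
            have hmem := hdc x hx i hxi
            simp only [hHv, Finset.mem_filter, Finset.mem_univ, true_and] at hmem
            exact hic hmem.2
          have hle := Finset.card_le_card hsub
          rw [Fin.card_Iio] at hle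
          have hip' : (i:ℕ) ≤ (p:ℕ) := Fin.le_def.mp hip
          omega
        have heq : (Finset.Iic p).filter (fun i => v i ≤ c) = Finset.Iic p :=
          Finset.filter_eq_self.mpr (fun i hi => hall i (Finset.mem_Iic.mp hi))
        rw [heq]
        exact Finset.card_filter_le _ _
      · push_neg at hm
        have hHsub : Hv ⊆ Finset.Iic p := by
          intro x hx
          have hsub : Finset.Iic x ⊆ Hv := fun i hi => hdc x hx i (Finset.mem_Iic.mp hi)
          have hle := Finset.card_le_card hsub
          rw [Fin.card_Iic] at hle
          simp only [Finset.mem_Iic, Fin.le_def]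
          omega
        have hveq : (Finset.Iic p).filter (fun i => v i ≤ c) = Hv := by
          ext i
          simp only [hHv, Finset.mem_filter, Finset.mem_Iic, Finset.mem_univ, true_and]
          constructor
          · rintro ⟨hip, hic⟩
            refine ⟨?_, hic⟩
            have := Fin.le_def.mp hip
            omega
          · intro hi
            refine ⟨?_, hi.2⟩
            have := hHsub (by simp only [hHv, Finset.mem_filter, Finset.mem_univ, true_and]; exact hi)
            exact Finset.mem_Iic.mp this
        have hsplitu := card_split u c (fun i : Fin n => (i:ℕ) < t)
        have hsplitv := card_split v c (fun i : Fin n => (i:ℕ) < t)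
        rw [← hHv] at hsplitv
        have hTsub : Finset.univ.filter (fun i : Fin n => ¬ (i:ℕ) < t ∧ v i ≤ c)
            ⊆ Finset.univ.filter (fun i : Fin n => ¬ (i:ℕ) < t ∧ u i ≤ c) := by
          intro i hi
          simp only [Finset.mem_filter, Finset.mem_univ, true_and, not_lt] at hi ⊢
          exact ⟨hi.1, le_trans (h2 i hi.1) hi.2⟩
        have husub : (Finset.Iic p).filter (fun i => u i ≤ c)
            ⊆ Finset.univ.filter (fun i : Fin n => (i:ℕ) < t ∧ u i ≤ c) := by
          intro i hi
          simp only [Finset.mem_filter, Finset.mem_Iic, Finset.mem_univ, true_and] at hi ⊢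
          refine ⟨?_, hi.2⟩
          have := Fin.le_def.mp hi.1
          omega
        rw [hveq]
        have hc1 := Finset.card_le_card hTsub
        have hc2 := Finset.card_le_card husub
        omega

end Statement11Proof
end
end

section
/- Let m, n be positive integers, N = m+n, and 0 ≤ t ≤ min(m,n). Define φ(y,v,z,u) to be the N×N matrix with row blocks of sizes (m,n) and column blocks of sizes (n,m) given by: top-left block w∘ᵐ·y·I^{m,n}_t·v⁻¹ (of size m×n), top-right block w∘ᵐ·y·J^m_t·z⁻¹·w∘ᵐ (m×m), bottom-left block u·J^n_t·v⁻¹ (n×n), bottom-right block u·I^{n,m}_t·z⁻¹·w∘ᵐ (n×m), where all factors are taken as matrices. Then for every (y,v,z,u) ∈ Σ^{m,n}_t, the matrix φ(y,v,z,u) is the permutation matrix of an element of S^{[-n,m]}_{m+n}[t], and the resulting map φ : Σ^{m,n}_t → S^{[-n,m]}_{m+n}[t] is a bijection. -/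
open Matrix

noncomputable section

/-- the set Σ^{m,n}_t of 4-tuples (y,v,z,u) -/
def SigmaSet (m n t : ℕ) :
    Set (Equiv.Perm (Fin m) × Equiv.Perm (Fin n) × Equiv.Perm (Fin m) × Equiv.Perm (Fin n)) :=
  {σ | tailMono t σ.1 ∧ headMono t σ.2.1 ∧ headMono t σ.2.2.1 ∧ tailMono t σ.2.2.2 ∧
       bruhatLE σ.2.2.1 σ.1 ∧ bruhatLE σ.2.1 σ.2.2.2}

/-- the set S^{[-n,m]}_{m+n}[t] -/
def Snm (m n t : ℕ) : Set (Equiv.Perm (Fin (m+n))) :=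
  {w | (∀ i : Fin (m+n),
          -(n:ℤ) ≤ ((w i : ℕ) : ℤ) - ((i : ℕ) : ℤ) ∧ ((w i : ℕ) : ℤ) - ((i : ℕ) : ℤ) ≤ (m:ℤ)) ∧
       (Finset.univ.filter (fun i : Fin (m+n) => (i:ℕ) < n ∧ (w i : ℕ) < m)).card = t}

/-- the matrix φ(y,v,z,u): row blocks of sizes (m,n), column blocks of sizes (n,m) -/
def phiMat (m n t : ℕ)
    (σ : Equiv.Perm (Fin m) × Equiv.Perm (Fin n) × Equiv.Perm (Fin m) × Equiv.Perm (Fin n)) :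
    Mat (m+n) (m+n) :=
  Matrix.reindex finSumFinEquiv (fe m n)
    (Matrix.fromBlocks
      (permMat m (revP m) * permMat m σ.1 * Imn m n t * permMat n σ.2.1⁻¹)
      (permMat m (revP m) * permMat m σ.1 * Jk m t * permMat m σ.2.2.1⁻¹ * permMat m (revP m))
      (permMat n σ.2.2.2 * Jk n t * permMat n σ.2.1⁻¹)
      (permMat n σ.2.2.2 * Imn n m t * permMat m σ.2.2.1⁻¹ * permMat m (revP m)))

namespace Stmt12

open Equiv Finset

variable {m n t k l : ℕ}

lemma permMat_mul_apply (w : Equiv.Perm (Fin k)) (M : Mat k l) (i : Fin k) (j : Fin l) :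
    (permMat k w * M) i j = M (w⁻¹ i) j := by
  simp only [Matrix.mul_apply, permMat]
  rw [Finset.sum_eq_single (w⁻¹ i)]
  · simp
  · intro b _ hb
    rw [if_neg, zero_mul]
    intro h
    exact hb (by rw [h]; exact (Equiv.symm_apply_apply w b).symm)
  · simp

lemma mul_permMat_apply (M : Mat k l) (w : Equiv.Perm (Fin l)) (i : Fin k) (j : Fin l) :
    (M * permMat l w) i j = M i (w j) := by
  simp only [Matrix.mul_apply, permMat]
  rw [Finset.sum_eq_single (w j)]
  · simp
  · intro b _ hb
    rw [if_neg (fun h => hb h), mul_zero]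
  · simp

lemma permMat_mul_permMat (w w' : Equiv.Perm (Fin k)) :
    permMat k w * permMat k w' = permMat k (w * w') := by
  ext i j
  rw [mul_permMat_apply]
  rfl

lemma permMat_injective (w w' : Equiv.Perm (Fin k)) (h : permMat k w = permMat k w') :
    w = w' := by
  ext j
  have := congrFun (congrFun h (w j)) j
  simp only [permMat, if_pos rfl] at this
  by_contra hne
  rw [if_neg (fun hh : w j = w' j => hne (by rw [hh]))] at this
  exact one_ne_zero this

def shuf (m n t : ℕ) (htm : t ≤ m) (htn : t ≤ n) : Fin n ⊕ Fin m ≃ Fin m ⊕ Fin n where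
  toFun s := match s with
    | .inl c => if h : (c : ℕ) < t then .inl ⟨c, h.trans_le htm⟩ else .inr c
    | .inr c => if h : (c : ℕ) < t then .inr ⟨c, h.trans_le htn⟩ else .inl c
  invFun s := match s with
    | .inl c => if h : (c : ℕ) < t then .inl ⟨c, h.trans_le htn⟩ else .inr c
    | .inr c => if h : (c : ℕ) < t then .inr ⟨c, h.trans_le htm⟩ else .inl c
  left_inv s := by
    rcases s with c | c <;> dsimp only <;> split_ifs with h <;> simp [h]
  right_inv s := by
    rcases s with c | c <;> dsimp only <;> split_ifs with h <;> simp [h]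

def Wp (htm : t ≤ m) (htn : t ≤ n)
    (σ : Equiv.Perm (Fin m) × Equiv.Perm (Fin n) × Equiv.Perm (Fin m) × Equiv.Perm (Fin n)) :
    Fin n ⊕ Fin m ≃ Fin m ⊕ Fin n :=
  (Equiv.sumCongr σ.2.1⁻¹ ((revP m).trans σ.2.2.1⁻¹)).trans
    ((shuf m n t htm htn).trans (Equiv.sumCongr (σ.1.trans (revP m)) σ.2.2.2))

lemma Wp_inl (htm : t ≤ m) (htn : t ≤ n) (σ) (j : Fin n) :
    Wp htm htn σ (.inl j) = if h : ((σ.2.1⁻¹ j : Fin n) : ℕ) < t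
      then .inl (revP m (σ.1 ⟨(σ.2.1⁻¹ j : Fin n), h.trans_le htm⟩))
      else .inr (σ.2.2.2 (σ.2.1⁻¹ j)) := by
  simp only [Wp, Equiv.trans_apply, Equiv.sumCongr_apply, Sum.map_inl, shuf, Equiv.coe_fn_mk]
  split_ifs with h
  · rfl
  · rfl

lemma Wp_inr (htm : t ≤ m) (htn : t ≤ n) (σ) (b : Fin m) :
    Wp htm htn σ (.inr b) = if h : ((σ.2.2.1⁻¹ (revP m b) : Fin m) : ℕ) < t
      then .inr (σ.2.2.2 ⟨(σ.2.2.1⁻¹ (revP m b) : Fin m), h.trans_le htn⟩)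
      else .inl (revP m (σ.1 (σ.2.2.1⁻¹ (revP m b)))) := by
  simp only [Wp, Equiv.trans_apply, Equiv.sumCongr_apply, Sum.map_inr, shuf, Equiv.coe_fn_mk]
  split_ifs with h
  · rfl
  · rfl

def Wfull (htm : t ≤ m) (htn : t ≤ n)
    (σ : Equiv.Perm (Fin m) × Equiv.Perm (Fin n) × Equiv.Perm (Fin m) × Equiv.Perm (Fin n)) :
    Equiv.Perm (Fin (m + n)) :=
  ((fe m n).symm.trans (Wp htm htn σ)).trans finSumFinEquiv

lemma fe_inl_val (j : Fin n) : ((fe m n (.inl j) : Fin (m + n)) : ℕ) = j := by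
  simp [fe]

lemma fe_inr_val (b : Fin m) : ((fe m n (.inr b) : Fin (m + n)) : ℕ) = n + b := by
  simp [fe, Nat.add_comm]

lemma row_inl_val (a : Fin m) : ((finSumFinEquiv (.inl a) : Fin (m + n)) : ℕ) = a := by
  simp

lemma row_inr_val (b : Fin n) : ((finSumFinEquiv (.inr b) : Fin (m + n)) : ℕ) = m + b := by
  simp

lemma Wfull_apply (htm : t ≤ m) (htn : t ≤ n) (σ) (q : Fin n ⊕ Fin m) :
    Wfull htm htn σ (fe m n q) = finSumFinEquiv (Wp htm htn σ q) := by
  simp [Wfull]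


variable {m n t : ℕ}

lemma revP_inv (k : ℕ) : (revP k)⁻¹ = revP k := rfl

lemma revP_revP (k : ℕ) (a : Fin k) : revP k (revP k a) = a := Fin.rev_rev a

lemma phiMat_eq (htm : t ≤ m) (htn : t ≤ n) (σ) :
    phiMat m n t σ = permMat (m + n) (Wfull htm htn σ) := by
  ext i j
  rw [phiMat, Matrix.reindex_apply, Matrix.submatrix_apply]
  obtain ⟨p, rfl⟩ := finSumFinEquiv.surjective i
  obtain ⟨q, rfl⟩ := (fe m n).surjective j
  rw [Equiv.symm_apply_apply, Equiv.symm_apply_apply, permMat, Wfull_apply]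
  simp only [Equiv.apply_eq_iff_eq]
  obtain ⟨y, v, z, u⟩ := σ
  rcases p with a | b <;> rcases q with j | b'
  · -- block 11 : rows Fin m, cols Fin n
    rw [Matrix.fromBlocks_apply₁₁, mul_permMat_apply, permMat_mul_permMat,
      permMat_mul_apply, Wp_inl]
    have hA : ((revP m * y)⁻¹ : Equiv.Perm (Fin m)) a = y⁻¹ (revP m a) := by
      simp [_root_.mul_inv_rev, revP_inv]
    rw [hA]
    simp only [Imn]
    set A := y⁻¹ (revP m a) with hAdef
    set c := v⁻¹ j with hcdef
    by_cases h : (c : ℕ) < t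
    · rw [dif_pos h]
      by_cases he : (A : ℕ) = (c : ℕ) ∧ (A : ℕ) < t
      · rw [if_pos he, if_pos]
        have hAc : A = ⟨(c : ℕ), he.1 ▸ A.isLt⟩ := Fin.ext he.1
        have : y A = revP m a := by rw [hAdef]; simp
        rw [← hAc, this, revP_revP]
      · rw [if_neg he, if_neg]
        intro hcon
        apply he
        rw [Sum.inl.injEq] at hcon
        have : y A = revP m a := by rw [hAdef]; simp
        have hyA : y A = y ⟨(c : ℕ), h.trans_le htm⟩ := by
          rw [this, hcon, revP_revP]
        have : A = ⟨(c : ℕ), h.trans_le htm⟩ := y.injective hyA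
        constructor
        · rw [this]
        · rw [this]; exact h
    · rw [dif_neg h,
        if_neg (show ¬((A : ℕ) = (c : ℕ) ∧ (A : ℕ) < t) by rintro ⟨h1, h2⟩; omega),
        if_neg (by simp)]
  · -- block 12 : rows Fin m, cols Fin m
    rw [Matrix.fromBlocks_apply₁₂, mul_permMat_apply, mul_permMat_apply,
      permMat_mul_permMat, permMat_mul_apply, Wp_inr]
    have hA : ((revP m * y)⁻¹ : Equiv.Perm (Fin m)) a = y⁻¹ (revP m a) := by
      simp [_root_.mul_inv_rev, revP_inv]
    rw [hA]
    simp only [Jk]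
    set A := y⁻¹ (revP m a) with hAdef
    set c := z⁻¹ (revP m b') with hcdef
    by_cases h : (c : ℕ) < t
    · rw [dif_pos h,
        if_neg (show ¬((A : ℕ) = (c : ℕ) ∧ t ≤ (A : ℕ)) by rintro ⟨h1, h2⟩; omega),
        if_neg (by simp)]
    · rw [dif_neg h]
      by_cases he : (A : ℕ) = (c : ℕ) ∧ t ≤ (A : ℕ)
      · rw [if_pos he, if_pos]
        have hAc : A = c := Fin.ext he.1
        have : y A = revP m a := by rw [hAdef]; simp
        rw [Sum.inl.injEq, ← hAc, this, revP_revP]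
      · rw [if_neg he, if_neg]
        intro hcon
        rw [Sum.inl.injEq] at hcon
        apply he
        have hya : y A = revP m a := by rw [hAdef]; simp
        have : A = c := y.injective (by rw [hya, hcon, revP_revP])
        exact ⟨by rw [this], this ▸ not_lt.mp h⟩
  · -- block 21 : rows Fin n, cols Fin n
    rw [Matrix.fromBlocks_apply₂₁, mul_permMat_apply, permMat_mul_apply, Wp_inl]
    simp only [Jk]
    set A := u⁻¹ b with hAdef
    set c := v⁻¹ j with hcdef
    by_cases h : (c : ℕ) < t
    · rw [dif_pos h,
        if_neg (show ¬((A : ℕ) = (c : ℕ) ∧ t ≤ (A : ℕ)) by rintro ⟨h1, h2⟩; omega),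
        if_neg (by simp)]
    · rw [dif_neg h]
      by_cases he : (A : ℕ) = (c : ℕ) ∧ t ≤ (A : ℕ)
      · rw [if_pos he, if_pos]
        have hAc : A = c := Fin.ext he.1
        rw [Sum.inr.injEq, ← hAc, hAdef]
        simp
      · rw [if_neg he, if_neg]
        intro hcon
        rw [Sum.inr.injEq] at hcon
        apply he
        have : A = c := by rw [hAdef, hcon]; simp
        exact ⟨by rw [this], this ▸ not_lt.mp h⟩
  · -- block 22 : rows Fin n, cols Fin m
    rw [Matrix.fromBlocks_apply₂₂, mul_permMat_apply, mul_permMat_apply,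
      permMat_mul_apply, Wp_inr]
    simp only [Imn]
    set A := u⁻¹ b with hAdef
    set c := z⁻¹ (revP m b') with hcdef
    by_cases h : (c : ℕ) < t
    · rw [dif_pos h]
      by_cases he : (A : ℕ) = (c : ℕ) ∧ (A : ℕ) < t
      · rw [if_pos he, if_pos]
        have hAc : A = ⟨(c : ℕ), h.trans_le htn⟩ := Fin.ext he.1
        rw [Sum.inr.injEq, ← hAc, hAdef]
        simp
      · rw [if_neg he, if_neg]
        intro hcon
        rw [Sum.inr.injEq] at hcon
        apply he
        have : A = ⟨(c : ℕ), h.trans_le htn⟩ := by rw [hAdef, hcon]; simp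
        exact ⟨by rw [this], by rw [this]; exact h⟩
    · rw [dif_neg h,
        if_neg (show ¬((A : ℕ) = (c : ℕ) ∧ (A : ℕ) < t) by rintro ⟨h1, h2⟩; omega),
        if_neg (by simp)]


open Finset

variable {k t : ℕ}

/-- number of positions `c < p` with `kk ≤ f c` -/
def cnt (f : Equiv.Perm (Fin k)) (p kk : ℕ) : ℕ :=
  (Finset.univ.filter fun c : Fin k => (c : ℕ) < p ∧ kk ≤ (f c : ℕ)).card

lemma card_val (k : ℕ) (Q : ℕ → Prop) [DecidablePred Q] :
    (Finset.univ.filter fun c : Fin k => Q (c : ℕ)).card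
      = ((Finset.range k).filter Q).card := by
  rw [← Finset.card_image_of_injective
    (Finset.univ.filter fun c : Fin k => Q (c : ℕ)) Fin.val_injective]
  congr 1
  ext x
  simp only [Finset.mem_image, Finset.mem_filter, Finset.mem_univ, true_and, Finset.mem_range]
  constructor
  · rintro ⟨c, hc, rfl⟩; exact ⟨c.isLt, hc⟩
  · rintro ⟨hx, hQ⟩; exact ⟨⟨x, hx⟩, hQ, rfl⟩

lemma card_val_Ico (k a b : ℕ) (hb : b ≤ k) :
    (Finset.univ.filter fun c : Fin k => a ≤ (c : ℕ) ∧ (c : ℕ) < b).card = b - a := by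
  rw [card_val k (fun x => a ≤ x ∧ x < b)]
  rw [show ((Finset.range k).filter fun x => a ≤ x ∧ x < b) = Finset.Ico a b by
    ext x; simp only [Finset.mem_filter, Finset.mem_range, Finset.mem_Ico]; omega]
  exact Nat.card_Ico a b

lemma card_val_ge (k a : ℕ) :
    (Finset.univ.filter fun c : Fin k => a ≤ (c : ℕ)).card = k - a := by
  rw [card_val k (fun x => a ≤ x)]
  rw [show ((Finset.range k).filter fun x => a ≤ x) = Finset.Ico a k by
    ext x; simp only [Finset.mem_filter, Finset.mem_range, Finset.mem_Ico]; omega]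
  exact Nat.card_Ico a k

lemma card_val_lt (k b : ℕ) (hb : b ≤ k) :
    (Finset.univ.filter fun c : Fin k => (c : ℕ) < b).card = b := by
  rw [card_val k (fun x => x < b)]
  rw [show ((Finset.range k).filter fun x => x < b) = Finset.range b by
    ext x; simp only [Finset.mem_filter, Finset.mem_range]; omega]
  exact Finset.card_range b

lemma split_count (P Q : Fin k → Prop) [DecidablePred P] [DecidablePred Q] :
    (Finset.univ.filter fun c => P c ∧ Q c).card
      + (Finset.univ.filter fun c => ¬ P c ∧ Q c).card
      = (Finset.univ.filter Q).card := by
  have h1 : (Finset.univ.filter fun c => P c ∧ Q c) = (Finset.univ.filter Q).filter P := by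
    ext c; simp only [Finset.mem_filter, Finset.mem_univ, true_and]; tauto
  have h2 : (Finset.univ.filter fun c => ¬ P c ∧ Q c)
      = (Finset.univ.filter Q).filter (fun c => ¬ P c) := by
    ext c; simp only [Finset.mem_filter, Finset.mem_univ, true_and]; tauto
  rw [h1, h2, Finset.card_filter_add_card_filter_not]

lemma card_filter_perm (f : Equiv.Perm (Fin k)) (P : Fin k → Prop) [DecidablePred P] :
    (Finset.univ.filter fun c => P (f c)).card = (Finset.univ.filter P).card := by
  rw [← Finset.card_image_of_injective (Finset.univ.filter fun c => P (f c)) f.injective]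
  congr 1
  ext x
  simp only [Finset.mem_image, Finset.mem_filter, Finset.mem_univ, true_and]
  constructor
  · rintro ⟨c, hc, rfl⟩; exact hc
  · intro hx; exact ⟨f⁻¹ x, by simpa using hx, by simp⟩

lemma cnt_total (f : Equiv.Perm (Fin k)) (kk : ℕ) :
    (Finset.univ.filter fun c : Fin k => kk ≤ (f c : ℕ)).card = k - kk := by
  rw [card_filter_perm f (fun a => kk ≤ (a : ℕ))]
  exact card_val_ge k kk

lemma cnt_split (f : Equiv.Perm (Fin k)) (p kk : ℕ) :
    cnt f p kk + (Finset.univ.filter fun c : Fin k => ¬ (c : ℕ) < p ∧ kk ≤ (f c : ℕ)).card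
      = k - kk := by
  rw [cnt, split_count (fun c : Fin k => (c : ℕ) < p) (fun c => kk ≤ (f c : ℕ)), cnt_total]

/-- number of indices of a list satisfying a predicate equals length of the filtered list -/
lemma length_filter_eq_card_index (l : List (Fin k)) (p : Fin k → Prop) [DecidablePred p] :
    (l.filter fun a => decide (p a)).length
      = (Finset.univ.filter fun i : Fin l.length => p (l.get i)).card := by
  induction l with
  | nil => simp
  | cons a l ih =>
    have hstep : (Finset.univ.filter fun i : Fin (a :: l).length => p ((a :: l).get i)).card
        = (if p a then 1 else 0)
          + (Finset.univ.filter fun i : Fin l.length => p (l.get i)).card := by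
      rw [Finset.card_filter, Finset.card_filter]
      exact Fin.sum_univ_succ (f := fun i : Fin (l.length + 1) =>
        if p ((a :: l).get i) then 1 else 0)
    rw [hstep, ← ih]
    by_cases hp : p a <;> simp [List.filter_cons, hp] <;> omega

lemma finset_card_filter_eq (A : Finset (Fin k)) (p : Fin k → Prop) [DecidablePred p] :
    (A.filter p).card = ((A.sort (· ≤ ·)).filter fun a => decide (p a)).length := by
  have h1 : (A.filter p).card = Multiset.card (A.val.filter p) := rfl
  rw [h1, ← Finset.sort_eq A (· ≤ ·), Multiset.filter_coe, Multiset.coe_card]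

/-- termwise comparison of sorted lists iff counting of large elements -/
lemma finsetLE_iff_cnt (A B : Finset (Fin k)) (hcard : A.card = B.card) :
    finsetLE A B ↔ ∀ kk : ℕ,
      (A.filter fun a => kk ≤ a.val).card ≤ (B.filter fun b => kk ≤ b.val).card := by
  set la := A.sort (· ≤ ·) with hla
  set lb := B.sort (· ≤ ·) with hlb
  have hlen : la.length = lb.length := by
    rw [hla, hlb, Finset.length_sort, Finset.length_sort, hcard]
  have hsa : ∀ i j : Fin la.length, i ≤ j → la.get i ≤ la.get j := by
    intro i j hij
    rcases eq_or_lt_of_le hij with h | h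
    · rw [h]
    · exact (List.pairwise_iff_get.mp (Finset.pairwise_sort A (· ≤ ·))) i j h
  have hsb : ∀ i j : Fin lb.length, i ≤ j → lb.get i ≤ lb.get j := by
    intro i j hij
    rcases eq_or_lt_of_le hij with h | h
    · rw [h]
    · exact (List.pairwise_iff_get.mp (Finset.pairwise_sort B (· ≤ ·))) i j h
  have hAcnt : ∀ kk : ℕ, (A.filter fun a => kk ≤ a.val).card
      = (Finset.univ.filter fun i : Fin la.length => kk ≤ (la.get i : ℕ)).card := by
    intro kk; rw [finset_card_filter_eq A, length_filter_eq_card_index]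
  have hBcnt : ∀ kk : ℕ, (B.filter fun b => kk ≤ b.val).card
      = (Finset.univ.filter fun i : Fin lb.length => kk ≤ (lb.get i : ℕ)).card := by
    intro kk; rw [finset_card_filter_eq B, length_filter_eq_card_index]
  constructor
  · intro h kk
    rw [hAcnt, hBcnt]
    have hget := (List.forall₂_iff_get.mp h).2
    apply Finset.card_le_card_of_injOn (fun i => Fin.cast hlen i)
    · intro i hi
      simp only [Finset.mem_coe, Finset.mem_filter, Finset.mem_univ, true_and] at hi ⊢
      have : la.get i ≤ lb.get (Fin.cast hlen i) := hget i i.isLt (hlen ▸ i.isLt)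
      exact le_trans hi this
    · intro i _ j _ hij
      have hv := congrArg Fin.val hij
      exact Fin.ext hv
  · intro h
    rw [finsetLE, ← hla, ← hlb]
    apply List.forall₂_of_length_eq_of_get hlen
    intro i h1 h2
    by_contra hcon
    push_neg at hcon
    set kk : ℕ := (la.get ⟨i, h1⟩ : ℕ) with hkk
    have hA : (Finset.univ.filter fun j : Fin la.length => kk ≤ (la.get j : ℕ)).card
        ≥ la.length - i := by
      have hsub : (Finset.univ.filter fun j : Fin la.length => i ≤ (j : ℕ))
          ⊆ (Finset.univ.filter fun j : Fin la.length => kk ≤ (la.get j : ℕ)) := by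
        intro j hj
        simp only [Finset.mem_filter, Finset.mem_univ, true_and] at hj ⊢
        exact hsa ⟨i, h1⟩ j (by simpa [Fin.le_def] using hj)
      have := Finset.card_le_card hsub
      rwa [card_val_ge] at this
    have hB : (Finset.univ.filter fun j : Fin lb.length => kk ≤ (lb.get j : ℕ)).card
        ≤ lb.length - i - 1 := by
      have hsub : (Finset.univ.filter fun j : Fin lb.length => kk ≤ (lb.get j : ℕ))
          ⊆ (Finset.univ.filter fun j : Fin lb.length => i + 1 ≤ (j : ℕ)) := by
        intro j hj
        simp only [Finset.mem_filter, Finset.mem_univ, true_and] at hj ⊢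
        by_contra hcc
        push_neg at hcc
        have : lb.get j ≤ lb.get ⟨i, h2⟩ := hsb j ⟨i, h2⟩ (by simp [Fin.le_def]; omega)
        have : (lb.get j : ℕ) ≤ (lb.get ⟨i, h2⟩ : ℕ) := this
        omega
      have := Finset.card_le_card hsub
      rw [card_val_ge] at this
      omega
    have hk := h kk
    rw [hAcnt, hBcnt] at hk
    have hilen : i < lb.length := h2
    omega
  

open Finset

variable {k t : ℕ}

lemma filter_and_comm (P Q : Fin k → Prop) [DecidablePred P] [DecidablePred Q] :
    (Finset.univ.filter fun c => P c ∧ Q c) = (Finset.univ.filter fun c => Q c ∧ P c) := by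
  ext c; simp only [Finset.mem_filter, Finset.mem_univ, true_and]; tauto

lemma image_filter_card (f : Equiv.Perm (Fin k)) (q : Fin k) (kk : ℕ) :
    ((((Finset.Iic q).image f)).filter fun a => kk ≤ a.val).card = cnt f ((q : ℕ) + 1) kk := by
  rw [Finset.filter_image, Finset.card_image_of_injective _ f.injective, cnt]
  congr 1
  ext c
  simp only [Finset.mem_filter, Finset.mem_Iic, Finset.mem_univ, true_and, Fin.le_def]
  omega

lemma cnt_eq_min (f : Equiv.Perm (Fin k)) (p kk : ℕ) : cnt f p kk = cnt f (min p k) kk := by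
  unfold cnt
  congr 1
  ext c
  simp only [Finset.mem_filter, Finset.mem_univ, true_and]
  have := c.isLt
  omega

lemma cnt_zero (f : Equiv.Perm (Fin k)) (kk : ℕ) : cnt f 0 kk = 0 := by
  simp [cnt]

lemma card_image_Iic (f : Equiv.Perm (Fin k)) (q : Fin k) :
    ((Finset.Iic q).image f).card = (Finset.Iic q).card :=
  Finset.card_image_of_injective _ f.injective

lemma bruhatLE_iff_cnt (zz yy : Equiv.Perm (Fin k)) :
    bruhatLE zz yy ↔ ∀ p kk : ℕ, cnt zz p kk ≤ cnt yy p kk := by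
  constructor
  · intro h p kk
    rcases Nat.eq_zero_or_pos (min p k) with h0 | hpos
    · rw [cnt_eq_min zz, cnt_eq_min yy, h0, cnt_zero, cnt_zero]
    · set q : Fin k := ⟨min p k - 1, by omega⟩ with hq
      have hq1 : (q : ℕ) + 1 = min p k := by
        simp only [hq]
        omega
      have hfl := (finsetLE_iff_cnt _ _
        (by rw [card_image_Iic, card_image_Iic])).mp (h q)
      have hc := hfl kk
      rw [image_filter_card, image_filter_card, hq1] at hc
      rw [cnt_eq_min zz, cnt_eq_min yy]
      exact hc
  · intro h q
    apply (finsetLE_iff_cnt _ _ (by rw [card_image_Iic, card_image_Iic])).mpr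
    intro kk
    rw [image_filter_card, image_filter_card]
    exact h _ kk

lemma bruhat_char (htk : t ≤ k) (yy zz : Equiv.Perm (Fin k))
    (hy : tailMono t yy) (hz : headMono t zz) :
    bruhatLE zz yy ↔ ∀ c : Fin k, t ≤ (c : ℕ) → (yy c : ℕ) ≤ (zz c : ℕ) := by
  rw [bruhatLE_iff_cnt]
  constructor
  · intro h c htc
    set kk := (yy c : ℕ) with hkk
    have hc_lt : (c : ℕ) < k := c.isLt
    have hkk_lt : kk < k := (yy c).isLt
    -- all positions ≥ c have yy-value ≥ kk
    have h1 : k - (c : ℕ)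
        ≤ (Finset.univ.filter fun c' : Fin k => ¬ (c' : ℕ) < (c : ℕ) ∧ kk ≤ (yy c' : ℕ)).card := by
      rw [← card_val_ge k (c : ℕ)]
      apply Finset.card_le_card
      intro c' hc'
      simp only [Finset.mem_filter, Finset.mem_univ, true_and, not_lt] at hc' ⊢
      refine ⟨by omega, ?_⟩
      by_cases hcc : (c : ℕ) = (c' : ℕ)
      · rw [show c' = c from Fin.ext hcc.symm]
      · have hlt : c < c' := Fin.lt_def.mpr (by omega)
        exact le_of_lt (hy c c' hlt htc)
    have hsplit_y := cnt_split yy (c : ℕ) kk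
    have h2 := h (c : ℕ) kk
    -- so cnt zz c kk ≤ c - kk, and kk ≤ c
    by_contra hcon
    push_neg at hcon
    -- T = positions ≤ c with zz-value < kk
    have hT1 : (Finset.univ.filter fun c' : Fin k => (c' : ℕ) ≤ (c : ℕ) ∧ (zz c' : ℕ) < kk).card
        ≤ kk := by
      have htar := card_val_lt k kk hkk_lt.le
      refine le_trans ?_ (le_of_eq htar)
      apply Finset.card_le_card_of_injOn (fun c' => zz c')
      · intro c' hc'
        simp only [Finset.mem_coe, Finset.mem_filter, Finset.mem_univ, true_and] at hc' ⊢
        exact hc'.2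
      · intro a _ b _ hab
        exact zz.injective hab
    have ha1 := card_val_lt k (c : ℕ) hc_lt.le
    have ha2 := split_count (fun c' : Fin k => kk ≤ (zz c' : ℕ))
      (fun c' : Fin k => (c' : ℕ) < (c : ℕ))
    have ha3 : (Finset.univ.filter fun c' : Fin k => kk ≤ (zz c' : ℕ) ∧ (c' : ℕ) < (c : ℕ)).card
        = cnt zz (c : ℕ) kk := by
      rw [filter_and_comm]; rfl
    have hins : insert c (Finset.univ.filter fun c' : Fin k =>
          ¬ kk ≤ (zz c' : ℕ) ∧ (c' : ℕ) < (c : ℕ))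
        ⊆ (Finset.univ.filter fun c' : Fin k => (c' : ℕ) ≤ (c : ℕ) ∧ (zz c' : ℕ) < kk) := by
      intro a ha
      rcases Finset.mem_insert.mp ha with rfl | ha
      · simp only [Finset.mem_filter, Finset.mem_univ, true_and]
        exact ⟨le_rfl, hcon⟩
      · simp only [Finset.mem_filter, Finset.mem_univ, true_and] at ha ⊢
        omega
    have hinscard := Finset.card_le_card hins
    rw [Finset.card_insert_of_notMem (by
      simp only [Finset.mem_filter, Finset.mem_univ, true_and]
      omega)] at hinscard
    omega
  · intro hpt p kk
    have main : ∀ p', t ≤ p' → cnt zz p' kk ≤ cnt yy p' kk := by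
      intro p' hp'
      have hy_sub : (Finset.univ.filter fun c' : Fin k => ¬ (c' : ℕ) < p' ∧ kk ≤ (yy c' : ℕ))
          ⊆ (Finset.univ.filter fun c' : Fin k => ¬ (c' : ℕ) < p' ∧ kk ≤ (zz c' : ℕ)) := by
        intro c' hc'
        simp only [Finset.mem_filter, Finset.mem_univ, true_and, not_lt] at hc' ⊢
        exact ⟨hc'.1, le_trans hc'.2 (hpt c' (by omega))⟩
      have hcard := Finset.card_le_card hy_sub
      have s1 := cnt_split yy p' kk
      have s2 := cnt_split zz p' kk
      omega
    by_cases hp : t ≤ p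
    · exact main p hp
    · push_neg at hp
      have hst := main t le_rfl
      have hico := card_val_Ico k p t htk
      have hy2 : cnt yy t kk ≤ cnt yy p kk + (t - p) := by
        have hsub : (Finset.univ.filter fun c' : Fin k => (c' : ℕ) < t ∧ kk ≤ (yy c' : ℕ))
            ⊆ (Finset.univ.filter fun c' : Fin k => (c' : ℕ) < p ∧ kk ≤ (yy c' : ℕ))
              ∪ (Finset.univ.filter fun c' : Fin k => p ≤ (c' : ℕ) ∧ (c' : ℕ) < t) := by
          intro c' hc'
          simp only [Finset.mem_filter, Finset.mem_univ, true_and, Finset.mem_union] at hc' ⊢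
          omega
        have hle := Finset.card_le_card hsub
        have hun := Finset.card_union_le
          (Finset.univ.filter fun c' : Fin k => (c' : ℕ) < p ∧ kk ≤ (yy c' : ℕ))
          (Finset.univ.filter fun c' : Fin k => p ≤ (c' : ℕ) ∧ (c' : ℕ) < t)
        have e1 : (Finset.univ.filter fun c' : Fin k => (c' : ℕ) < t ∧ kk ≤ (yy c' : ℕ)).card
            = cnt yy t kk := rfl
        have e2 : (Finset.univ.filter fun c' : Fin k => (c' : ℕ) < p ∧ kk ≤ (yy c' : ℕ)).card
            = cnt yy p kk := rfl
        omega
      by_cases hz0 : cnt zz p kk = 0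
      · omega
      · obtain ⟨c₀, hc₀⟩ : ∃ c₀ : Fin k, (c₀ : ℕ) < p ∧ kk ≤ (zz c₀ : ℕ) := by
          have hne : (Finset.univ.filter fun c' : Fin k =>
              (c' : ℕ) < p ∧ kk ≤ (zz c' : ℕ)).Nonempty :=
            Finset.card_pos.mp (Nat.pos_of_ne_zero hz0)
          obtain ⟨c₀, hm⟩ := hne
          simp only [Finset.mem_filter, Finset.mem_univ, true_and] at hm
          exact ⟨c₀, hm⟩
        have hz2 : cnt zz p kk + (t - p) ≤ cnt zz t kk := by
          have hsub : (Finset.univ.filter fun c' : Fin k => (c' : ℕ) < p ∧ kk ≤ (zz c' : ℕ))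
              ∪ (Finset.univ.filter fun c' : Fin k => p ≤ (c' : ℕ) ∧ (c' : ℕ) < t)
              ⊆ (Finset.univ.filter fun c' : Fin k => (c' : ℕ) < t ∧ kk ≤ (zz c' : ℕ)) := by
            intro c' hc'
            rcases Finset.mem_union.mp hc' with hm | hm <;>
              simp only [Finset.mem_filter, Finset.mem_univ, true_and] at hm ⊢
            · exact ⟨by omega, hm.2⟩
            · refine ⟨hm.2, ?_⟩
              have hlt : zz c₀ < zz c' := hz c₀ c' (Fin.lt_def.mpr (by omega)) hm.2
              have : (zz c₀ : ℕ) < (zz c' : ℕ) := hlt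
              omega
          have hdisj : Disjoint
              (Finset.univ.filter fun c' : Fin k => (c' : ℕ) < p ∧ kk ≤ (zz c' : ℕ))
              (Finset.univ.filter fun c' : Fin k => p ≤ (c' : ℕ) ∧ (c' : ℕ) < t) := by
            rw [Finset.disjoint_left]
            intro a ha hb
            simp only [Finset.mem_filter, Finset.mem_univ, true_and] at ha hb
            omega
          have hle := Finset.card_le_card hsub
          rw [Finset.card_union_of_disjoint hdisj] at hle
          have e1 : (Finset.univ.filter fun c' : Fin k => (c' : ℕ) < t ∧ kk ≤ (zz c' : ℕ)).card
              = cnt zz t kk := rfl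
          have e2 : (Finset.univ.filter fun c' : Fin k => (c' : ℕ) < p ∧ kk ≤ (zz c' : ℕ)).card
              = cnt zz p kk := rfl
          omega
        omega


open Finset

variable {m n t : ℕ}

lemma val_revP {k : ℕ} (a : Fin k) : ((revP k a : Fin k) : ℕ) = k - 1 - (a : ℕ) := by
  show ((Fin.rev a : Fin k) : ℕ) = _
  rw [Fin.val_rev]
  omega

lemma Wfull_val_inl (htm : t ≤ m) (htn : t ≤ n) (σ) (c : Fin n) :
    ((Wfull htm htn σ (fe m n (.inl (σ.2.1 c)))) : ℕ)
      = if h : (c : ℕ) < t then m - 1 - (σ.1 ⟨(c : ℕ), h.trans_le htm⟩ : ℕ)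
        else m + (σ.2.2.2 c : ℕ) := by
  rw [Wfull_apply, Wp_inl]
  have hc : σ.2.1⁻¹ (σ.2.1 c) = c := Equiv.symm_apply_apply _ _
  simp only [hc]
  split_ifs with h
  · rw [row_inl_val, val_revP]
  · rw [row_inr_val]

lemma Wfull_val_inr (htm : t ≤ m) (htn : t ≤ n) (σ) (c : Fin m) :
    ((Wfull htm htn σ (fe m n (.inr (revP m (σ.2.2.1 c))))) : ℕ)
      = if h : (c : ℕ) < t then m + (σ.2.2.2 ⟨(c : ℕ), h.trans_le htn⟩ : ℕ)
        else m - 1 - (σ.1 c : ℕ) := by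
  rw [Wfull_apply, Wp_inr]
  have hc : σ.2.2.1⁻¹ (revP m (revP m (σ.2.2.1 c))) = c := by
    rw [revP_revP]
    exact Equiv.symm_apply_apply _ _
  simp only [hc]
  split_ifs with h
  · rw [row_inr_val]
  · rw [row_inl_val, val_revP]

lemma Wfull_card (htm : t ≤ m) (htn : t ≤ n) (σ) :
    (Finset.univ.filter fun i : Fin (m + n) =>
      (i : ℕ) < n ∧ ((Wfull htm htn σ i : Fin (m + n)) : ℕ) < m).card = t := by
  have himg : (Finset.univ.filter fun i : Fin (m + n) =>
        (i : ℕ) < n ∧ ((Wfull htm htn σ i : Fin (m + n)) : ℕ) < m)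
      = (Finset.univ.filter fun c : Fin n => (c : ℕ) < t).image
          (fun c => fe m n (.inl (σ.2.1 c))) := by
    ext i
    simp only [Finset.mem_filter, Finset.mem_univ, true_and, Finset.mem_image]
    constructor
    · rintro ⟨hin, hiw⟩
      set j : Fin n := ⟨(i : ℕ), hin⟩ with hj
      have hij : i = fe m n (.inl j) := Fin.ext (by rw [fe_inl_val])
      set c := σ.2.1⁻¹ j with hcdef
      have hjc : σ.2.1 c = j := by rw [hcdef]; simp
      refine ⟨c, ?_, by rw [hij, hjc]⟩
      by_contra hct
      push_neg at hct
      rw [hij, ← hjc, Wfull_val_inl htm htn σ c, dif_neg (by omega)] at hiw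
      omega
    · rintro ⟨c, hct, rfl⟩
      constructor
      · rw [fe_inl_val]; exact (σ.2.1 c).isLt
      · rw [Wfull_val_inl htm htn σ c, dif_pos hct]
        omega
  rw [himg, Finset.card_image_of_injective, card_val_lt n t htn]
  intro a b hab
  have h1 : (Sum.inl (σ.2.1 a) : Fin n ⊕ Fin m) = Sum.inl (σ.2.1 b) := (fe m n).injective hab
  rw [Sum.inl.injEq] at h1
  exact σ.2.1.injective h1

lemma mem_Snm_iff (hm : 0 < m) (hn : 0 < n) (htm : t ≤ m) (htn : t ≤ n) (σ) :
    Wfull htm htn σ ∈ Snm m n t ↔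
      ((∀ c : Fin m, t ≤ (c : ℕ) → (σ.1 c : ℕ) ≤ (σ.2.2.1 c : ℕ)) ∧
       (∀ c : Fin n, t ≤ (c : ℕ) → (σ.2.2.2 c : ℕ) ≤ (σ.2.1 c : ℕ))) := by
  constructor
  · rintro ⟨hrange, _⟩
    constructor
    · intro c htc
      have hb := (hrange (fe m n (.inr (revP m (σ.2.2.1 c))))).1
      rw [Wfull_val_inr htm htn σ c, dif_neg (by omega), fe_inr_val, val_revP] at hb
      have h1 : (σ.1 c : ℕ) < m := (σ.1 c).isLt
      have h2 : (σ.2.2.1 c : ℕ) < m := (σ.2.2.1 c).isLt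
      omega
    · intro c htc
      have hb := (hrange (fe m n (.inl (σ.2.1 c)))).2
      rw [Wfull_val_inl htm htn σ c, dif_neg (by omega), fe_inl_val] at hb
      have h1 : (σ.2.2.2 c : ℕ) < n := (σ.2.2.2 c).isLt
      have h2 : (σ.2.1 c : ℕ) < n := (σ.2.1 c).isLt
      omega
  · rintro ⟨h1, h2⟩
    refine ⟨?_, Wfull_card htm htn σ⟩
    intro i
    obtain ⟨q, rfl⟩ := (fe m n).surjective i
    rcases q with j | b
    · set c := σ.2.1⁻¹ j with hcdef
      have hjc : j = σ.2.1 c := by rw [hcdef]; simp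
      rw [hjc, Wfull_val_inl htm htn σ c, fe_inl_val]
      have hvc : (σ.2.1 c : ℕ) < n := (σ.2.1 c).isLt
      split_ifs with h
      · have : (σ.1 ⟨(c : ℕ), h.trans_le htm⟩ : ℕ) < m := (σ.1 _).isLt
        constructor <;> push_cast <;> omega
      · have huc : (σ.2.2.2 c : ℕ) < n := (σ.2.2.2 c).isLt
        have := h2 c (by omega)
        constructor <;> push_cast <;> omega
    · set c := σ.2.2.1⁻¹ (revP m b) with hcdef
      have hbc : b = revP m (σ.2.2.1 c) := by
        rw [hcdef]
        simp [revP_revP]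
      rw [hbc, Wfull_val_inr htm htn σ c, fe_inr_val, val_revP]
      have hzc : (σ.2.2.1 c : ℕ) < m := (σ.2.2.1 c).isLt
      split_ifs with h
      · have huc : (σ.2.2.2 ⟨(c : ℕ), h.trans_le htn⟩ : ℕ) < n := (σ.2.2.2 _).isLt
        constructor <;> push_cast <;> omega
      · have hyc : (σ.1 c : ℕ) < m := (σ.1 c).isLt
        have := h1 c (by omega)
        constructor <;> push_cast <;> omega


open Finset Function

variable {m n t : ℕ}

lemma sort_unique {k : ℕ} (κ : Fin k → ℕ) (hκ : Function.Injective κ)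
    (ρ : Equiv.Perm (Fin k)) (hmono : Monotone (κ ∘ ρ)) : ρ = Tuple.sort κ := by
  have h1 : κ ∘ ρ = κ ∘ Tuple.sort κ := Tuple.unique_monotone hmono (Tuple.monotone_sort κ)
  exact Equiv.ext fun c => hκ (congrFun h1 c)

lemma sort_strictMono {k : ℕ} (κ : Fin k → ℕ) (hκ : Function.Injective κ) :
    StrictMono (κ ∘ Tuple.sort κ) :=
  (Tuple.monotone_sort κ).strictMono_of_injective (hκ.comp (Tuple.sort κ).injective)

lemma downward_closed_iff {k s : ℕ} (P : Fin k → Prop) [DecidablePred P]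
    (hdc : ∀ c c' : Fin k, c ≤ c' → P c' → P c)
    (hcard : (Finset.univ.filter P).card = s) :
    ∀ c : Fin k, P c ↔ (c : ℕ) < s := by
  intro c
  constructor
  · intro hPc
    have hsub : (Finset.univ.filter fun c' : Fin k => (c' : ℕ) ≤ (c : ℕ))
        ⊆ Finset.univ.filter P := by
      intro a ha
      simp only [Finset.mem_filter, Finset.mem_univ, true_and] at ha ⊢
      exact hdc a c (Fin.le_def.mpr ha) hPc
    have hle := Finset.card_le_card hsub
    have hcc : (Finset.univ.filter fun c' : Fin k => (c' : ℕ) ≤ (c : ℕ)).card = (c : ℕ) + 1 := by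
      have hset : (Finset.univ.filter fun c' : Fin k => (c' : ℕ) ≤ (c : ℕ))
          = (Finset.univ.filter fun c' : Fin k => (c' : ℕ) < (c : ℕ) + 1) := by
        ext a
        simp only [Finset.mem_filter, Finset.mem_univ, true_and]
        omega
      rw [hset]
      exact card_val_lt k _ (by have := c.isLt; omega)
    omega
  · intro hcs
    by_contra hPc
    have hsub : Finset.univ.filter P
        ⊆ (Finset.univ.filter fun c' : Fin k => (c' : ℕ) < (c : ℕ)) := by
      intro a ha
      simp only [Finset.mem_filter, Finset.mem_univ, true_and] at ha ⊢
      by_contra hac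
      push_neg at hac
      exact hPc (hdc c a (Fin.le_def.mpr hac) ha)
    have hle := Finset.card_le_card hsub
    rw [card_val_lt k _ (le_of_lt c.isLt)] at hle
    omega

lemma card_filter_equiv {α β : Type*} [Fintype α] [Fintype β] [DecidableEq β]
    (e : α ≃ β) (P : β → Prop) [DecidablePred P] :
    (Finset.univ.filter fun a => P (e a)).card = (Finset.univ.filter P).card := by
  rw [← Finset.card_image_of_injective (Finset.univ.filter fun a => P (e a)) e.injective]
  congr 1
  ext x
  simp only [Finset.mem_image, Finset.mem_filter, Finset.mem_univ, true_and]
  constructor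
  · rintro ⟨c, hc, rfl⟩; exact hc
  · intro hx; exact ⟨e.symm x, by simpa using hx, by simp⟩

lemma card_filter_sum {α β : Type*} [Fintype α] [Fintype β] [DecidableEq α] [DecidableEq β]
    (P : α ⊕ β → Prop) [DecidablePred P] :
    (Finset.univ.filter P).card
      = (Finset.univ.filter fun a : α => P (.inl a)).card
        + (Finset.univ.filter fun b : β => P (.inr b)).card := by
  rw [Finset.card_filter, Finset.card_filter, Finset.card_filter, Fintype.sum_sum_type]

lemma card_filter_isRight {α β : Type*} [Fintype α] [Fintype β] [DecidableEq α] [DecidableEq β] :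
    (Finset.univ.filter fun s : α ⊕ β => s.isRight = true).card = Fintype.card β := by
  rw [show (Finset.univ.filter fun s : α ⊕ β => s.isRight = true)
      = Finset.univ.image (Sum.inr : β → α ⊕ β) from by
    ext s
    rcases s with a | b <;> simp]
  rw [Finset.card_image_of_injective _ Sum.inr_injective, Finset.card_univ]

lemma isLeft_symm_iff (i : Fin (m + n)) :
    (finSumFinEquiv.symm i : Fin m ⊕ Fin n).isLeft = true ↔ (i : ℕ) < m := by
  obtain ⟨p, rfl⟩ := finSumFinEquiv.surjective i
  rw [Equiv.symm_apply_apply]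
  rcases p with a | b
  · simp only [Sum.isLeft_inl, row_inl_val]
    simpa using a.isLt
  · simp only [Sum.isLeft_inr, row_inr_val]
    constructor
    · intro h; exact absurd h (Bool.false_ne_true)
    · omega

/-- conjugated permutation, columns `Fin n ⊕ Fin m`, rows `Fin m ⊕ Fin n` -/
def W2 (w : Equiv.Perm (Fin (m + n))) : Fin n ⊕ Fin m ≃ Fin m ⊕ Fin n :=
  (fe m n).trans (Equiv.trans w finSumFinEquiv.symm)

lemma W2_Wfull (htm : t ≤ m) (htn : t ≤ n) (σ) : W2 (Wfull htm htn σ) = Wp htm htn σ := by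
  apply Equiv.ext
  intro x
  simp [W2, Wfull]

lemma Wfull_eq_of_W2 (htm : t ≤ m) (htn : t ≤ n) (σ) (w : Equiv.Perm (Fin (m + n)))
    (h : Wp htm htn σ = W2 w) : Wfull htm htn σ = w := by
  apply Equiv.ext
  intro i
  have := congrFun (congrArg (fun (e : Fin n ⊕ Fin m ≃ Fin m ⊕ Fin n) => e.toFun)
    h) ((fe m n).symm i)
  simp only [W2, Equiv.toFun_as_coe, Equiv.trans_apply, Equiv.apply_symm_apply] at this
  simp only [Wfull, Equiv.trans_apply]
  rw [this]
  simp

/-- key for the permutation v -/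
def kvKey (w : Equiv.Perm (Fin (m + n))) : Fin n → ℕ := fun j =>
  Sum.elim (fun _ : Fin m => (j : ℕ)) (fun b : Fin n => (m + n) + (b : ℕ)) (W2 w (.inl j))

/-- key for the permutation z -/
def kzKey (w : Equiv.Perm (Fin (m + n))) : Fin m → ℕ := fun a =>
  Sum.elim (fun a' : Fin m => (m + n) + ((revP m a' : Fin m) : ℕ)) (fun _ : Fin n => (a : ℕ))
    (W2 w (.inr (revP m a)))

lemma kvKey_injective (w : Equiv.Perm (Fin (m + n))) : Function.Injective (kvKey w) := by
  intro j1 j2 h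
  rcases h1 : W2 w (.inl j1) with x1 | x1 <;> rcases h2 : W2 w (.inl j2) with x2 | x2 <;>
    rw [kvKey, kvKey, h1, h2] at h <;> simp only [Sum.elim_inl, Sum.elim_inr] at h
  · exact Fin.ext h
  · have := j1.isLt; omega
  · have := j2.isLt; omega
  · have hx : x1 = x2 := Fin.ext (by omega)
    have : W2 w (.inl j1) = W2 w (.inl j2) := by rw [h1, h2, hx]
    have := (W2 w).injective this
    exact Sum.inl_injective this

lemma kzKey_injective (w : Equiv.Perm (Fin (m + n))) : Function.Injective (kzKey w) := by
  intro a1 a2 h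
  rcases h1 : W2 w (.inr (revP m a1)) with x1 | x1 <;>
    rcases h2 : W2 w (.inr (revP m a2)) with x2 | x2 <;>
    rw [kzKey, kzKey, h1, h2] at h <;> simp only [Sum.elim_inl, Sum.elim_inr] at h
  · have hx : x1 = x2 := by
      apply Fin.ext
      have e1 := val_revP x1
      have e2 := val_revP x2
      have i1 := x1.isLt
      have i2 := x2.isLt
      omega
    have : W2 w (.inr (revP m a1)) = W2 w (.inr (revP m a2)) := by rw [h1, h2, hx]
    have h3 := Sum.inr_injective ((W2 w).injective this)
    have h4 := congrArg (revP m) h3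
    rw [revP_revP, revP_revP] at h4
    exact h4
  · have := a2.isLt; omega
  · have := a1.isLt; omega
  · exact Fin.ext h

lemma kvKey_lt_iff (w : Equiv.Perm (Fin (m + n))) (j : Fin n) :
    kvKey w j < m + n ↔ (W2 w (.inl j)).isLeft = true := by
  rcases h1 : W2 w (.inl j) with x | x <;> rw [kvKey, h1] <;>
    simp only [Sum.elim_inl, Sum.elim_inr, Sum.isLeft_inl, Sum.isLeft_inr]
  · have := j.isLt; constructor <;> intro <;> first | trivial | omega
  · constructor
    · intro h; omega
    · intro h; exact absurd h Bool.false_ne_true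

lemma kzKey_lt_iff (w : Equiv.Perm (Fin (m + n))) (a : Fin m) :
    kzKey w a < m + n ↔ (W2 w (.inr (revP m a))).isRight = true := by
  rcases h1 : W2 w (.inr (revP m a)) with x | x <;> rw [kzKey, h1] <;>
    simp only [Sum.elim_inl, Sum.elim_inr, Sum.isRight_inl, Sum.isRight_inr]
  · constructor
    · intro h; omega
    · intro h; exact absurd h Bool.false_ne_true
  · have := a.isLt; constructor <;> intro <;> first | trivial | omega

lemma kvKey_eq_of_isLeft (w : Equiv.Perm (Fin (m + n))) (j : Fin n)
    (h : (W2 w (.inl j)).isLeft = true) : kvKey w j = (j : ℕ) := by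
  rcases h1 : W2 w (.inl j) with x | x
  · rw [kvKey, h1]; rfl
  · rw [h1] at h; exact absurd h Bool.false_ne_true

lemma kzKey_eq_of_isRight (w : Equiv.Perm (Fin (m + n))) (a : Fin m)
    (h : (W2 w (.inr (revP m a))).isRight = true) : kzKey w a = (a : ℕ) := by
  rcases h1 : W2 w (.inr (revP m a)) with x | x
  · rw [h1] at h; exact absurd h Bool.false_ne_true
  · rw [kzKey, h1]; rfl

lemma shuf_symm_inl (htm : t ≤ m) (htn : t ≤ n) (a : Fin m) :
    (shuf m n t htm htn).symm (.inl a)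
      = if h : (a : ℕ) < t then .inl (⟨(a : ℕ), h.trans_le htn⟩ : Fin n) else .inr a := rfl

lemma shuf_symm_inr (htm : t ≤ m) (htn : t ≤ n) (b : Fin n) :
    (shuf m n t htm htn).symm (.inr b)
      = if h : (b : ℕ) < t then .inr (⟨(b : ℕ), h.trans_le htm⟩ : Fin m) else .inl b := rfl


open Finset Function

variable {m n t : ℕ}

lemma Wp_inl_apply_v (htm : t ≤ m) (htn : t ≤ n) (σ) (c : Fin n) :
    Wp htm htn σ (.inl (σ.2.1 c)) = if h : (c : ℕ) < t
      then .inl (revP m (σ.1 ⟨(c : ℕ), h.trans_le htm⟩))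
      else .inr (σ.2.2.2 c) := by
  rw [Wp_inl]
  have hc : σ.2.1⁻¹ (σ.2.1 c) = c := Equiv.symm_apply_apply _ _
  simp only [hc]

lemma Wp_inr_apply_z (htm : t ≤ m) (htn : t ≤ n) (σ) (a : Fin m) :
    Wp htm htn σ (.inr (revP m (σ.2.2.1 a))) = if h : (a : ℕ) < t
      then .inr (σ.2.2.2 ⟨(a : ℕ), h.trans_le htn⟩)
      else .inl (revP m (σ.1 a)) := by
  rw [Wp_inr]
  have hc : σ.2.2.1⁻¹ (revP m (revP m (σ.2.2.1 a))) = a := by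
    rw [revP_revP]
    exact Equiv.symm_apply_apply _ _
  simp only [hc]

lemma Wp_y_lt (htm : t ≤ m) (htn : t ≤ n) (σ) (a : Fin m) (ha : (a : ℕ) < t) :
    Wp htm htn σ (.inl (σ.2.1 ⟨(a : ℕ), ha.trans_le htn⟩)) = .inl (revP m (σ.1 a)) := by
  rw [Wp_inl_apply_v htm htn σ ⟨(a : ℕ), ha.trans_le htn⟩,
    dif_pos (show ((⟨(a : ℕ), ha.trans_le htn⟩ : Fin n) : ℕ) < t from ha)]

lemma Wp_y_ge (htm : t ≤ m) (htn : t ≤ n) (σ) (a : Fin m) (ha : ¬ (a : ℕ) < t) :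
    Wp htm htn σ (.inr (revP m (σ.2.2.1 a))) = .inl (revP m (σ.1 a)) := by
  rw [Wp_inr_apply_z htm htn σ a, dif_neg ha]

lemma Wp_u_lt (htm : t ≤ m) (htn : t ≤ n) (σ) (c : Fin n) (hc : (c : ℕ) < t) :
    Wp htm htn σ (.inr (revP m (σ.2.2.1 ⟨(c : ℕ), hc.trans_le htm⟩))) = .inr (σ.2.2.2 c) := by
  rw [Wp_inr_apply_z htm htn σ ⟨(c : ℕ), hc.trans_le htm⟩,
    dif_pos (show ((⟨(c : ℕ), hc.trans_le htm⟩ : Fin m) : ℕ) < t from hc)]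

lemma Wp_u_ge (htm : t ≤ m) (htn : t ≤ n) (σ) (c : Fin n) (hc : ¬ (c : ℕ) < t) :
    Wp htm htn σ (.inl (σ.2.1 c)) = .inr (σ.2.2.2 c) := by
  rw [Wp_inl_apply_v htm htn σ c, dif_neg hc]

lemma kv_comp (htm : t ≤ m) (htn : t ≤ n) (σ) (c : Fin n) :
    kvKey (Wfull htm htn σ) (σ.2.1 c)
      = if (c : ℕ) < t then ((σ.2.1 c : Fin n) : ℕ) else (m + n) + (σ.2.2.2 c : ℕ) := by
  simp only [kvKey]
  rw [W2_Wfull, Wp_inl_apply_v]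
  split_ifs with h
  · rfl
  · rfl

lemma kz_comp (htm : t ≤ m) (htn : t ≤ n) (σ) (a : Fin m) :
    kzKey (Wfull htm htn σ) (σ.2.2.1 a)
      = if (a : ℕ) < t then ((σ.2.2.1 a : Fin m) : ℕ) else (m + n) + (σ.1 a : ℕ) := by
  simp only [kzKey]
  rw [W2_Wfull, Wp_inr_apply_z]
  split_ifs with h
  · rfl
  · simp only [Sum.elim_inl, revP_revP]

lemma v_eq_sort (htm : t ≤ m) (htn : t ≤ n) (σ)
    (hσv : headMono t σ.2.1) (hσu : tailMono t σ.2.2.2) :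
    σ.2.1 = Tuple.sort (kvKey (Wfull htm htn σ)) := by
  apply sort_unique _ (kvKey_injective _)
  intro i j hij
  rcases eq_or_lt_of_le hij with rfl | hlt
  · exact le_rfl
  simp only [Function.comp_apply]
  rw [kv_comp htm htn σ i, kv_comp htm htn σ j]
  by_cases hj : (j : ℕ) < t
  · have hi : (i : ℕ) < t := by have := Fin.lt_def.mp hlt; omega
    rw [if_pos hi, if_pos hj]
    exact le_of_lt (hσv i j hlt hj)
  · by_cases hi : (i : ℕ) < t
    · rw [if_pos hi, if_neg hj]
      have := (σ.2.1 i).isLt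
      omega
    · rw [if_neg hi, if_neg hj]
      have hlt2 : (σ.2.2.2 i : ℕ) < (σ.2.2.2 j : ℕ) := hσu i j hlt (by omega)
      omega

lemma z_eq_sort (htm : t ≤ m) (htn : t ≤ n) (σ)
    (hσz : headMono t σ.2.2.1) (hσy : tailMono t σ.1) :
    σ.2.2.1 = Tuple.sort (kzKey (Wfull htm htn σ)) := by
  apply sort_unique _ (kzKey_injective _)
  intro i j hij
  rcases eq_or_lt_of_le hij with rfl | hlt
  · exact le_rfl
  simp only [Function.comp_apply]
  rw [kz_comp htm htn σ i, kz_comp htm htn σ j]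
  by_cases hj : (j : ℕ) < t
  · have hi : (i : ℕ) < t := by have := Fin.lt_def.mp hlt; omega
    rw [if_pos hi, if_pos hj]
    exact le_of_lt (hσz i j hlt hj)
  · by_cases hi : (i : ℕ) < t
    · rw [if_pos hi, if_neg hj]
      have := (σ.2.2.1 i).isLt
      omega
    · rw [if_neg hi, if_neg hj]
      have hlt2 : (σ.1 i : ℕ) < (σ.1 j : ℕ) := hσy i j hlt (by omega)
      omega

lemma Wfull_injective (htm : t ≤ m) (htn : t ≤ n) (σ σ')
    (hσ : σ ∈ SigmaSet m n t) (hσ' : σ' ∈ SigmaSet m n t)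
    (h : Wfull htm htn σ = Wfull htm htn σ') : σ = σ' := by
  obtain ⟨hy, hv, hz, hu, _, _⟩ := hσ
  obtain ⟨hy', hv', hz', hu', _, _⟩ := hσ'
  have hWp : Wp htm htn σ = Wp htm htn σ' := by
    rw [← W2_Wfull htm htn σ, ← W2_Wfull htm htn σ', h]
  have hveq : σ.2.1 = σ'.2.1 := by
    rw [v_eq_sort htm htn σ hv hu, v_eq_sort htm htn σ' hv' hu', h]
  have hzeq : σ.2.2.1 = σ'.2.2.1 := by
    rw [z_eq_sort htm htn σ hz hy, z_eq_sort htm htn σ' hz' hy', h]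
  have hyeq : σ.1 = σ'.1 := by
    apply Equiv.ext
    intro a
    by_cases ha : (a : ℕ) < t
    · have q1 := Wp_y_lt htm htn σ a ha
      have q2 := Wp_y_lt htm htn σ' a ha
      rw [hWp, hveq] at q1
      have h3 := Sum.inl_injective (q2.symm.trans q1)
      exact ((revP m).injective h3).symm
    · have q1 := Wp_y_ge htm htn σ a ha
      have q2 := Wp_y_ge htm htn σ' a ha
      rw [hWp, hzeq] at q1
      have h3 := Sum.inl_injective (q2.symm.trans q1)
      exact ((revP m).injective h3).symm
  have hueq : σ.2.2.2 = σ'.2.2.2 := by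
    apply Equiv.ext
    intro c
    by_cases hc : (c : ℕ) < t
    · have q1 := Wp_u_lt htm htn σ c hc
      have q2 := Wp_u_lt htm htn σ' c hc
      rw [hWp, hzeq] at q1
      exact (Sum.inr_injective (q2.symm.trans q1)).symm
    · have q1 := Wp_u_ge htm htn σ c hc
      have q2 := Wp_u_ge htm htn σ' c hc
      rw [hWp, hveq] at q1
      exact (Sum.inr_injective (q2.symm.trans q1)).symm
  exact Prod.ext hyeq (Prod.ext hveq (Prod.ext hzeq hueq))


open Finset Function

variable {m n t : ℕ}

def vW (w : Equiv.Perm (Fin (m + n))) : Equiv.Perm (Fin n) := Tuple.sort (kvKey w)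

def zW (w : Equiv.Perm (Fin (m + n))) : Equiv.Perm (Fin m) := Tuple.sort (kzKey w)

def SC2W (w : Equiv.Perm (Fin (m + n))) : Fin n ⊕ Fin m ≃ Fin n ⊕ Fin m :=
  Equiv.sumCongr (vW w)⁻¹ ((revP m).trans (zW w)⁻¹)

def EW (htm : t ≤ m) (htn : t ≤ n) (w : Equiv.Perm (Fin (m + n))) :
    Fin m ⊕ Fin n ≃ Fin m ⊕ Fin n :=
  (shuf m n t htm htn).symm.trans ((SC2W w).symm.trans (W2 w))

lemma W2_inl_apply (w : Equiv.Perm (Fin (m + n))) (j : Fin n) :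
    W2 w (.inl j) = finSumFinEquiv.symm (w (fe m n (.inl j))) := rfl

lemma SC2W_symm_inl (w : Equiv.Perm (Fin (m + n))) (x : Fin n) :
    (SC2W w).symm (.inl x) = .inl (vW w x) := rfl

lemma SC2W_symm_inr (w : Equiv.Perm (Fin (m + n))) (x : Fin m) :
    (SC2W w).symm (.inr x) = .inr (revP m (zW w x)) := rfl

lemma EW_inl (htm : t ≤ m) (htn : t ≤ n) (w : Equiv.Perm (Fin (m + n))) (a : Fin m) :
    EW htm htn w (.inl a) = if h : (a : ℕ) < t
      then W2 w (.inl (vW w ⟨(a : ℕ), h.trans_le htn⟩))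
      else W2 w (.inr (revP m (zW w a))) := by
  rw [EW]
  simp only [Equiv.trans_apply]
  rw [shuf_symm_inl htm htn a]
  split_ifs with h
  · rw [SC2W_symm_inl]
  · rw [SC2W_symm_inr]

lemma EW_inr (htm : t ≤ m) (htn : t ≤ n) (w : Equiv.Perm (Fin (m + n))) (b : Fin n) :
    EW htm htn w (.inr b) = if h : (b : ℕ) < t
      then W2 w (.inr (revP m (zW w ⟨(b : ℕ), h.trans_le htm⟩)))
      else W2 w (.inl (vW w b)) := by
  rw [EW]
  simp only [Equiv.trans_apply]
  rw [shuf_symm_inr htm htn b]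
  split_ifs with h
  · rw [SC2W_symm_inr]
  · rw [SC2W_symm_inl]

lemma Wfull_surjective (hm : 0 < m) (hn : 0 < n) (htm : t ≤ m) (htn : t ≤ n)
    (w : Equiv.Perm (Fin (m + n)))
    (hcard : (Finset.univ.filter fun i : Fin (m + n) =>
        (i : ℕ) < n ∧ ((w i : Fin (m + n)) : ℕ) < m).card = t) :
    ∃ σ : Equiv.Perm (Fin m) × Equiv.Perm (Fin n) × Equiv.Perm (Fin m) × Equiv.Perm (Fin n),
      (tailMono t σ.1 ∧ headMono t σ.2.1 ∧ headMono t σ.2.2.1 ∧ tailMono t σ.2.2.2)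
        ∧ Wfull htm htn σ = w := by
  -- counting facts
  have hA : (Finset.univ.filter fun j : Fin n => (W2 w (.inl j)).isLeft = true).card = t := by
    rw [← hcard]
    have himg : (Finset.univ.filter fun i : Fin (m + n) =>
          (i : ℕ) < n ∧ ((w i : Fin (m + n)) : ℕ) < m)
        = (Finset.univ.filter fun j : Fin n => (W2 w (.inl j)).isLeft = true).image
            (fun j => fe m n (.inl j)) := by
      ext i
      simp only [Finset.mem_filter, Finset.mem_univ, true_and, Finset.mem_image]
      constructor
      · rintro ⟨hin, hiw⟩
        refine ⟨⟨(i : ℕ), hin⟩, ?_, Fin.ext (by rw [fe_inl_val])⟩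
        rw [W2_inl_apply, isLeft_symm_iff]
        have : fe m n (.inl (⟨(i : ℕ), hin⟩ : Fin n)) = i := Fin.ext (by rw [fe_inl_val])
        rw [this]
        exact hiw
      · rintro ⟨j, hj, rfl⟩
        rw [W2_inl_apply, isLeft_symm_iff] at hj
        exact ⟨by rw [fe_inl_val]; exact j.isLt, hj⟩
    rw [himg, Finset.card_image_of_injective]
    intro a b hab
    exact Sum.inl_injective ((fe m n).injective hab)
  have hAll : (Finset.univ.filter fun s : Fin n ⊕ Fin m => ((W2 w) s).isRight = true).card
      = n := by
    rw [card_filter_equiv (W2 w) (fun p => p.isRight = true), card_filter_isRight,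
      Fintype.card_fin]
  have hsplit := card_filter_sum (fun s : Fin n ⊕ Fin m => ((W2 w) s).isRight = true)
  have hLneg : (Finset.univ.filter fun j : Fin n => ¬ (W2 w (.inl j)).isLeft = true)
      = (Finset.univ.filter fun j : Fin n => (W2 w (.inl j)).isRight = true) := by
    ext j
    simp only [Finset.mem_filter, Finset.mem_univ, true_and]
    rcases W2 w (.inl j) with x | x <;> simp
  have hLsum := Finset.card_filter_add_card_filter_not
    (s := (Finset.univ : Finset (Fin n))) (p := fun j => (W2 w (.inl j)).isLeft = true)
  rw [hA, hLneg] at hLsum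
  have huniv : (Finset.univ : Finset (Fin n)).card = n := by
    rw [Finset.card_univ, Fintype.card_fin]
  have hZcount : (Finset.univ.filter fun b : Fin m => (W2 w (.inr b)).isRight = true).card
      = t := by omega
  have hZ : (Finset.univ.filter fun a : Fin m =>
      (W2 w (.inr (revP m a))).isRight = true).card = t := by
    rw [card_filter_perm (revP m) (fun b : Fin m => (W2 w (.inr b)).isRight = true)]
    exact hZcount
  -- the sorted permutations
  have hvmono : StrictMono (kvKey w ∘ vW w) := sort_strictMono (kvKey w) (kvKey_injective w)
  have hzmono : StrictMono (kzKey w ∘ zW w) := sort_strictMono (kzKey w) (kzKey_injective w)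
  have Pv : ∀ c : Fin n, ((c : ℕ) < t ↔ (W2 w (.inl (vW w c))).isLeft = true) := by
    have hset : (Finset.univ.filter fun c : Fin n => kvKey w (vW w c) < m + n)
        = (Finset.univ.filter fun c : Fin n => (W2 w (.inl (vW w c))).isLeft = true) := by
      ext c
      simp only [Finset.mem_filter, Finset.mem_univ, true_and]
      exact kvKey_lt_iff w (vW w c)
    have hcard2 : (Finset.univ.filter fun c : Fin n => kvKey w (vW w c) < m + n).card = t := by
      rw [hset, card_filter_perm (vW w) (fun j : Fin n => (W2 w (.inl j)).isLeft = true), hA]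
    have hdc : ∀ c c' : Fin n, c ≤ c' → kvKey w (vW w c') < m + n
        → kvKey w (vW w c) < m + n := by
      intro c c' hcc' hP
      exact lt_of_le_of_lt (hvmono.monotone hcc') hP
    intro c
    rw [← kvKey_lt_iff w (vW w c)]
    exact (downward_closed_iff (fun c : Fin n => kvKey w (vW w c) < m + n) hdc hcard2 c).symm
  have Pz : ∀ a : Fin m, ((a : ℕ) < t ↔ (W2 w (.inr (revP m (zW w a)))).isRight = true) := by
    have hset : (Finset.univ.filter fun a : Fin m => kzKey w (zW w a) < m + n)
        = (Finset.univ.filter fun a : Fin m =>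
            (W2 w (.inr (revP m (zW w a)))).isRight = true) := by
      ext a
      simp only [Finset.mem_filter, Finset.mem_univ, true_and]
      exact kzKey_lt_iff w (zW w a)
    have hcard2 : (Finset.univ.filter fun a : Fin m => kzKey w (zW w a) < m + n).card = t := by
      rw [hset]
      rw [show (Finset.univ.filter fun a : Fin m =>
            (W2 w (.inr (revP m (zW w a)))).isRight = true)
          = (Finset.univ.filter fun a : Fin m =>
            ((fun b : Fin m => (W2 w (.inr (revP m b))).isRight = true) ((zW w) a))) from rfl]
      rw [card_filter_perm (zW w) (fun b : Fin m => (W2 w (.inr (revP m b))).isRight = true)]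
      exact hZ
    have hdc : ∀ a a' : Fin m, a ≤ a' → kzKey w (zW w a') < m + n
        → kzKey w (zW w a) < m + n := by
      intro a a' haa' hP
      exact lt_of_le_of_lt (hzmono.monotone haa') hP
    intro a
    rw [← kzKey_lt_iff w (zW w a)]
    exact (downward_closed_iff (fun a : Fin m => kzKey w (zW w a) < m + n) hdc hcard2 a).symm
  -- head monotonicity
  have hvhead : headMono t (vW w) := by
    intro i j hij hjt
    have hi : (i : ℕ) < t := by have := Fin.lt_def.mp hij; omega
    have hkey : kvKey w (vW w i) < kvKey w (vW w j) := hvmono hij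
    rw [kvKey_eq_of_isLeft w _ ((Pv i).mp hi), kvKey_eq_of_isLeft w _ ((Pv j).mp hjt)] at hkey
    exact Fin.lt_def.mpr hkey
  have hzhead : headMono t (zW w) := by
    intro i j hij hjt
    have hi : (i : ℕ) < t := by have := Fin.lt_def.mp hij; omega
    have hkey : kzKey w (zW w i) < kzKey w (zW w j) := hzmono hij
    rw [kzKey_eq_of_isRight w _ ((Pz i).mp hi), kzKey_eq_of_isRight w _ ((Pz j).mp hjt)] at hkey
    exact Fin.lt_def.mpr hkey
  -- E preserves the summands
  have hEl : ∀ a : Fin m, (EW htm htn w (.inl a)).isLeft = true := by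
    intro a
    rw [EW_inl htm htn w a]
    split_ifs with h
    · exact (Pv ⟨(a : ℕ), h.trans_le htn⟩).mp h
    · have hnr : ¬ (W2 w (.inr (revP m (zW w a)))).isRight = true := fun hr => h ((Pz a).mpr hr)
      rcases hx : W2 w (.inr (revP m (zW w a))) with x | x
      · rfl
      · rw [hx] at hnr
        simp at hnr
  have hEr : ∀ b : Fin n, (EW htm htn w (.inr b)).isRight = true := by
    intro b
    rw [EW_inr htm htn w b]
    split_ifs with h
    · exact (Pz ⟨(b : ℕ), h.trans_le htm⟩).mp h
    · have hnl : ¬ (W2 w (.inl (vW w b))).isLeft = true := fun hl => h ((Pv b).mpr hl)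
      rcases hx : W2 w (.inl (vW w b)) with x | x
      · rw [hx] at hnl
        simp at hnl
      · rfl
  -- the left and right components of E
  have hfLeq : ∀ a : Fin m, EW htm htn w (.inl a)
      = .inl (Sum.elim id (fun _ : Fin n => a) (EW htm htn w (.inl a))) := by
    intro a
    rcases hx : EW htm htn w (.inl a) with x | x
    · rfl
    · have := hEl a
      rw [hx] at this
      simp at this
  have hfReq : ∀ b : Fin n, EW htm htn w (.inr b)
      = .inr (Sum.elim (fun _ : Fin m => b) id (EW htm htn w (.inr b))) := by
    intro b
    rcases hx : EW htm htn w (.inr b) with x | x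
    · have := hEr b
      rw [hx] at this
      simp at this
    · rfl
  have hfLbij : Function.Bijective
      (fun a : Fin m => Sum.elim id (fun _ : Fin n => a) (EW htm htn w (.inl a))) := by
    rw [Fintype.bijective_iff_injective_and_card]
    refine ⟨?_, rfl⟩
    intro a b hab
    have h1 : EW htm htn w (.inl a) = EW htm htn w (.inl b) := by
      rw [hfLeq a, hfLeq b]
      exact congrArg Sum.inl hab
    exact Sum.inl_injective ((EW htm htn w).injective h1)
  have hfRbij : Function.Bijective
      (fun b : Fin n => Sum.elim (fun _ : Fin m => b) id (EW htm htn w (.inr b))) := by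
    rw [Fintype.bijective_iff_injective_and_card]
    refine ⟨?_, rfl⟩
    intro a b hab
    have h1 : EW htm htn w (.inr a) = EW htm htn w (.inr b) := by
      rw [hfReq a, hfReq b]
      exact congrArg Sum.inr hab
    exact Sum.inr_injective ((EW htm htn w).injective h1)
  set yE : Fin m ≃ Fin m := Equiv.ofBijective _ hfLbij with hyE
  set u : Equiv.Perm (Fin n) := Equiv.ofBijective _ hfRbij with hu
  set y : Equiv.Perm (Fin m) := yE.trans (revP m) with hy
  have hyEa : ∀ a : Fin m, EW htm htn w (.inl a) = .inl (yE a) := fun a => hfLeq a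
  have hua : ∀ b : Fin n, EW htm htn w (.inr b) = .inr (u b) := fun b => hfReq b
  have hyrev : ∀ a : Fin m, revP m (y a) = yE a := by
    intro a
    rw [hy]
    exact revP_revP m (yE a)
  -- SC1 = E
  have hSC1 : Equiv.sumCongr (y.trans (revP m)) u = EW htm htn w := by
    apply Equiv.ext
    rintro (a | b)
    · rw [hyEa a]
      simp only [Equiv.sumCongr_apply, Sum.map_inl, Equiv.trans_apply]
      rw [hyrev a]
    · rw [hua b]
      rfl
  have hWp : Wp htm htn (y, vW w, zW w, u) = W2 w := by
    apply Equiv.ext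
    intro x
    have hstep : Wp htm htn (y, vW w, zW w, u) x
        = (Equiv.sumCongr (y.trans (revP m)) u)
            ((shuf m n t htm htn) ((SC2W w) x)) := rfl
    rw [hstep, hSC1]
    rw [EW]
    simp only [Equiv.trans_apply, Equiv.symm_apply_apply]
  have hWfull : Wfull htm htn (y, vW w, zW w, u) = w := Wfull_eq_of_W2 htm htn _ w hWp
  -- tail monotonicity
  have hutail : tailMono t u := by
    have key : ∀ c : Fin n, t ≤ (c : ℕ) → kvKey w (vW w c) = (m + n) + (u c : ℕ) := by
      intro c hc
      have h1 : EW htm htn w (.inr c) = W2 w (.inl (vW w c)) := by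
        rw [EW_inr htm htn w c, dif_neg (by omega)]
      have h2 : W2 w (.inl (vW w c)) = .inr (u c) := by rw [← h1, hua c]
      simp only [kvKey]
      rw [h2]
      rfl
    intro i j hij hti
    have htj : t ≤ (j : ℕ) := by have := Fin.lt_def.mp hij; omega
    have hkey : kvKey w (vW w i) < kvKey w (vW w j) := hvmono hij
    rw [key i hti, key j htj] at hkey
    exact Fin.lt_def.mpr (by omega)
  have hytail : tailMono t y := by
    have key : ∀ a : Fin m, t ≤ (a : ℕ) → kzKey w (zW w a) = (m + n) + (y a : ℕ) := by
      intro a ha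
      have h1 : EW htm htn w (.inl a) = W2 w (.inr (revP m (zW w a))) := by
        rw [EW_inl htm htn w a, dif_neg (by omega)]
      have h2 : W2 w (.inr (revP m (zW w a))) = .inl (yE a) := by rw [← h1, hyEa a]
      simp only [kzKey]
      rw [h2]
      simp only [Sum.elim_inl]
      rw [← hyrev a, revP_revP]
    intro i j hij hti
    have htj : t ≤ (j : ℕ) := by have := Fin.lt_def.mp hij; omega
    have hkey : kzKey w (zW w i) < kzKey w (zW w j) := hzmono hij
    rw [key i hti, key j htj] at hkey
    exact Fin.lt_def.mpr (by omega)
  exact ⟨(y, vW w, zW w, u), ⟨hytail, hvhead, hzhead, hutail⟩, hWfull⟩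

end Stmt12

theorem statement12 (m n t : ℕ) (hm : 0 < m) (hn : 0 < n) (htm : t ≤ m) (htn : t ≤ n) :
    -- φ maps Σ into S^{[-n,m]}_{m+n}[t] (as permutation matrices)
    (∀ σ ∈ SigmaSet m n t, ∃ w ∈ Snm m n t, permMat (m+n) w = phiMat m n t σ) ∧
    -- injectivity
    (∀ σ ∈ SigmaSet m n t, ∀ σ' ∈ SigmaSet m n t,
      phiMat m n t σ = phiMat m n t σ' → σ = σ') ∧
    -- surjectivity
    (∀ w ∈ Snm m n t, ∃ σ ∈ SigmaSet m n t, phiMat m n t σ = permMat (m+n) w) := by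
  refine ⟨?_, ?_, ?_⟩
  · intro σ hσ
    obtain ⟨hy, hv, hz, hu, hbzy, hbvu⟩ := hσ
    refine ⟨Stmt12.Wfull htm htn σ, ?_, (Stmt12.phiMat_eq htm htn σ).symm⟩
    rw [Stmt12.mem_Snm_iff hm hn htm htn σ]
    constructor
    · exact fun c htc => ((Stmt12.bruhat_char htm σ.1 σ.2.2.1 hy hz).mp hbzy) c htc
    · exact fun c htc => ((Stmt12.bruhat_char htn σ.2.2.2 σ.2.1 hu hv).mp hbvu) c htc
  · intro σ hσ σ' hσ' hphi
    apply Stmt12.Wfull_injective htm htn σ σ' hσ hσ'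
    apply Stmt12.permMat_injective
    rw [← Stmt12.phiMat_eq htm htn σ, ← Stmt12.phiMat_eq htm htn σ', hphi]
  · intro w hw
    obtain ⟨hrange, hcard⟩ := hw
    obtain ⟨σ, ⟨hy, hv, hz, hu⟩, hWf⟩ := Stmt12.Wfull_surjective hm hn htm htn w hcard
    refine ⟨σ, ?_, ?_⟩
    · have hmem : Stmt12.Wfull htm htn σ ∈ Snm m n t := by
        rw [hWf]; exact ⟨hrange, hcard⟩
      obtain ⟨h1, h2⟩ := (Stmt12.mem_Snm_iff hm hn htm htn σ).mp hmem
      exact ⟨hy, hv, hz, hu, (Stmt12.bruhat_char htm σ.1 σ.2.2.1 hy hz).mpr h1,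
        (Stmt12.bruhat_char htn σ.2.2.2 σ.2.1 hu hv).mpr h2⟩
    · rw [Stmt12.phiMat_eq htm htn σ, hWf]
end
end
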